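/- arXiv:math/0010058 — 3 statements merged into one kernel-verified Lean document; each statement's English description precedes it below -/
import Mathlib

section
/- Let E be a finite-dimensional inner product space, L : E → E symmetric positive definite, R ⊆ E an L-invariant subspace with orthogonal projection P : E → R satisfying L ∘ P = P ∘ L. Then for any subspace F ⊆ E with dim F = dim R and F ∩ R^⊥ = {0}: |det(L|_R)| · |det(P|_F)| = |det(P|_{L(F)})| · |det(L|_F)| ≤ |det(L|_F)|. -/
open scoped RealInnerProductSpace
open Module

/-- `|det L|` for a linear map between finite-dimensional real inner product spaces. -/
noncomputable def absDet {E F : Type*} [NormedAddCommGroup E] [InnerProductSpace ℝ E]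
    [NormedAddCommGroup F] [InnerProductSpace ℝ F] [FiniteDimensional ℝ E]
    (L : E →ₗ[ℝ] F) : ℝ :=
  Real.sqrt (Matrix.det (Matrix.of fun i j =>
    ⟪L (stdOrthonormalBasis ℝ E i), L (stdOrthonormalBasis ℝ E j)⟫))

open scoped Matrix

section Helpers

set_option linter.unusedSectionVars false

variable {X Y Z : Type*} [NormedAddCommGroup X] [InnerProductSpace ℝ X]
  [NormedAddCommGroup Y] [InnerProductSpace ℝ Y]
  [NormedAddCommGroup Z] [InnerProductSpace ℝ Z]
  [FiniteDimensional ℝ X] [FiniteDimensional ℝ Y] [FiniteDimensional ℝ Z]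

lemma gram_quadform {n : ℕ} (v : Fin n → X) (x : Fin n → ℝ) :
    dotProduct x ((Matrix.of fun i j => (⟪v i, v j⟫ : ℝ)).mulVec x) =
      ⟪∑ i, x i • v i, ∑ j, x j • v j⟫ := by
  simp only [dotProduct, Matrix.mulVec, Matrix.of_apply, sum_inner, inner_sum,
    real_inner_smul_left, real_inner_smul_right, dotProduct, Finset.mul_sum]
  refine Finset.sum_congr rfl fun i _ => Finset.sum_congr rfl fun j _ => by
    rw [real_inner_comm (v j) (v i)]; ring

lemma gram_posSemidef {n : ℕ} (v : Fin n → X) :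
    (Matrix.of fun i j => (⟪v i, v j⟫ : ℝ)).PosSemidef := by
  refine Matrix.PosSemidef.of_dotProduct_mulVec_nonneg ?_ ?_
  · ext i j
    simp [Matrix.conjTranspose_apply, real_inner_comm]
  · intro x
    rw [star_trivial, gram_quadform]
    exact real_inner_self_nonneg

lemma psd_det_nonneg {n : ℕ} {G : Matrix (Fin n) (Fin n) ℝ} (hG : G.PosSemidef) :
    0 ≤ G.det := by
  rw [hG.1.det_eq_prod_eigenvalues]
  exact Finset.prod_nonneg fun i _ => hG.eigenvalues_nonneg i

lemma absDet_comp (A : Y →ₗ[ℝ] Z) (B : X →ₗ[ℝ] Y) (h : finrank ℝ X = finrank ℝ Y) :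
    absDet (A ∘ₗ B) = absDet A * absDet B := by
  classical
  set e := stdOrthonormalBasis ℝ X with he
  set f := stdOrthonormalBasis ℝ Y with hf
  set c : Fin (finrank ℝ X) ≃ Fin (finrank ℝ Y) := finCongr h with hc
  set N : Matrix (Fin (finrank ℝ X)) (Fin (finrank ℝ X)) ℝ :=
    Matrix.of fun k i => ⟪f (c k), B (e i)⟫ with hN
  set GA : Matrix (Fin (finrank ℝ Y)) (Fin (finrank ℝ Y)) ℝ :=
    Matrix.of fun k l => ⟪A (f k), A (f l)⟫ with hGA
  have expand : ∀ x : X, B x = ∑ k, ⟪f k, B x⟫ • f k := fun x => (f.sum_repr' (B x)).symm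
  have hAB : (Matrix.of fun i j => (⟪A (B (e i)), A (B (e j))⟫ : ℝ)) =
      Nᵀ * (GA.submatrix c c) * N := by
    ext i j
    have lhs_eq : (⟪A (B (e i)), A (B (e j))⟫ : ℝ) =
        ∑ k, ∑ l, ⟪f k, B (e i)⟫ * (⟪A (f k), A (f l)⟫ * ⟪f l, B (e j)⟫) := by
      conv_lhs => rw [expand (e i), expand (e j)]
      rw [map_sum, map_sum, sum_inner]
      refine Finset.sum_congr rfl fun k _ => ?_
      rw [inner_sum]
      refine Finset.sum_congr rfl fun l _ => ?_
      rw [map_smul, map_smul, real_inner_smul_left, real_inner_smul_right]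
      ring
    rw [Matrix.of_apply, lhs_eq]
    simp only [Matrix.mul_apply, Matrix.transpose_apply, Matrix.submatrix_apply,
      Matrix.of_apply, Finset.sum_mul, Finset.mul_sum]
    conv_rhs => rw [Finset.sum_comm]
    rw [← Equiv.sum_comp c
      (fun k => ∑ l, (⟪f k, B (e i)⟫ : ℝ) * (⟪A (f k), A (f l)⟫ * ⟪f l, B (e j)⟫))]
    refine Finset.sum_congr rfl fun k _ => ?_
    rw [← Equiv.sum_comp c
      (fun l => (⟪f (c k), B (e i)⟫ : ℝ) * (⟪A (f (c k)), A (f l)⟫ * ⟪f l, B (e j)⟫))]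
    refine Finset.sum_congr rfl fun l _ => ?_
    simp only [hN, hGA, Matrix.of_apply]
    ring
  have hB : (Matrix.of fun i j => (⟪B (e i), B (e j)⟫ : ℝ)) = Nᵀ * N := by
    ext i j
    have h2 := f.sum_inner_mul_inner (B (e i)) (B (e j))
    rw [Matrix.of_apply, ← h2]
    simp only [Matrix.mul_apply, Matrix.transpose_apply]
    rw [← Equiv.sum_comp c (fun k => (⟪B (e i), f k⟫ : ℝ) * ⟪f k, B (e j)⟫)]
    refine Finset.sum_congr rfl fun k _ => ?_
    simp only [hN, Matrix.of_apply]
    rw [real_inner_comm (B (e i))]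
  have hGAnn : 0 ≤ GA.det := psd_det_nonneg (gram_posSemidef fun k => A (f k))
  have hdet1 : (Matrix.of fun i j => (⟪A (B (e i)), A (B (e j))⟫ : ℝ)).det =
      GA.det * (N.det) ^ 2 := by
    rw [hAB, Matrix.det_mul, Matrix.det_mul, Matrix.det_transpose,
      Matrix.det_submatrix_equiv_self]
    ring
  have hdet2 : (Matrix.of fun i j => (⟪B (e i), B (e j)⟫ : ℝ)).det = (N.det) ^ 2 := by
    rw [hB, Matrix.det_mul, Matrix.det_transpose]; ring
  show Real.sqrt ((Matrix.of fun i j => (⟪A (B (e i)), A (B (e j))⟫ : ℝ)).det) =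
      Real.sqrt GA.det * Real.sqrt ((Matrix.of fun i j => (⟪B (e i), B (e j)⟫ : ℝ)).det)
  rw [hdet1, hdet2, Real.sqrt_mul hGAnn]


lemma absDet_nonneg' {X Y : Type*} [NormedAddCommGroup X] [InnerProductSpace ℝ X]
    [NormedAddCommGroup Y] [InnerProductSpace ℝ Y] [FiniteDimensional ℝ X]
    (T : X →ₗ[ℝ] Y) : 0 ≤ absDet T := Real.sqrt_nonneg _

lemma absDet_congr (T₁ : X →ₗ[ℝ] Y) (T₂ : X →ₗ[ℝ] Z)
    (h : ∀ x y : X, ⟪T₁ x, T₁ y⟫ = ⟪T₂ x, T₂ y⟫) : absDet T₁ = absDet T₂ := by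
  simp only [absDet, h]

lemma psd_det_le_one {n : ℕ} {G : Matrix (Fin n) (Fin n) ℝ}
    (hG : G.PosSemidef) (hle : (1 - G).PosSemidef) : G.det ≤ 1 := by
  rw [hG.1.det_eq_prod_eigenvalues]
  have key : ∀ i, hG.1.eigenvalues i ≤ 1 := by
    intro i
    have heig := hG.1.eigenvalues_eq i
    have h0 := hle.dotProduct_mulVec_nonneg ⇑(hG.1.eigenvectorBasis i)
    have hvnorm : ‖hG.1.eigenvectorBasis i‖ = 1 := hG.1.eigenvectorBasis.orthonormal.1 i
    have hvv : dotProduct (star ⇑(hG.1.eigenvectorBasis i))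
        ⇑(hG.1.eigenvectorBasis i) = 1 := by
      have h2 : (⟪hG.1.eigenvectorBasis i, hG.1.eigenvectorBasis i⟫ : ℝ) = 1 := by
        rw [real_inner_self_eq_norm_sq, hvnorm]; norm_num
      rw [← h2, EuclideanSpace.inner_eq_star_dotProduct, dotProduct_comm]
    rw [Matrix.sub_mulVec, dotProduct_sub, Matrix.one_mulVec, hvv] at h0
    simp only [RCLike.re_to_real] at heig
    linarith
  exact Finset.prod_le_one (fun i _ => hG.eigenvalues_nonneg i) (fun i _ => key i)

/-- If `T` is a contraction then `absDet T ≤ 1`. -/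
lemma absDet_le_one (T : X →ₗ[ℝ] Y) (hT : ∀ x, ‖T x‖ ≤ ‖x‖) : absDet T ≤ 1 := by
  set e := stdOrthonormalBasis ℝ X with he
  set G : Matrix (Fin (finrank ℝ X)) (Fin (finrank ℝ X)) ℝ :=
    Matrix.of fun i j => ⟪T (e i), T (e j)⟫ with hG
  have hGpsd : G.PosSemidef := gram_posSemidef fun i => T (e i)
  have hId : (Matrix.of fun i j => (⟪e i, e j⟫ : ℝ)) = 1 := by
    ext i j
    rw [Matrix.of_apply, orthonormal_iff_ite.mp e.orthonormal i j, Matrix.one_apply]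
  have hle : (1 - G).PosSemidef := by
    refine Matrix.PosSemidef.of_dotProduct_mulVec_nonneg ?_ ?_
    · exact Matrix.isHermitian_one.sub hGpsd.1
    · intro x
      rw [star_trivial, Matrix.sub_mulVec, dotProduct_sub, sub_nonneg]
      have h1 : dotProduct x ((1 : Matrix _ _ ℝ).mulVec x) =
          ⟪∑ i, x i • e i, ∑ j, x j • e j⟫ := by
        rw [← hId, gram_quadform]
      rw [h1, hG, gram_quadform]
      have hsum : ∑ i, x i • T (e i) = T (∑ i, x i • e i) := by
        rw [map_sum]; simp_rw [map_smul]
      rw [hsum, real_inner_self_eq_norm_sq, real_inner_self_eq_norm_sq]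
      exact pow_le_pow_left₀ (norm_nonneg _) (hT (∑ i, x i • e i)) 2
  have hdet : G.det ≤ 1 := psd_det_le_one hGpsd hle
  calc absDet T = Real.sqrt G.det := rfl
    _ ≤ Real.sqrt 1 := Real.sqrt_le_sqrt hdet
    _ = 1 := Real.sqrt_one

end Helpers

/-- For `L` symmetric positive definite, `R` an `L`-invariant subspace whose orthogonal
projection `P` commutes with `L`, and `F` of the same dimension as `R` with
`F ∩ Rᗮ = {0}`:  `|det(L|_R)|·|det(P|_F)| = |det(P|_{L(F)})|·|det(L|_F)| ≤ |det(L|_F)|`. -/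
theorem det_proj_commute_ineq
    {E : Type*} [NormedAddCommGroup E] [InnerProductSpace ℝ E] [FiniteDimensional ℝ E]
    (L : E →ₗ[ℝ] E)
    (hLsym : ∀ x y : E, ⟪L x, y⟫ = ⟪x, L y⟫)
    (hLpos : ∀ x : E, x ≠ 0 → 0 < ⟪L x, x⟫)
    (R : Submodule ℝ E)
    (hRinv : R.map L = R)
    (hcomm : L ∘ₗ (R.subtype ∘ₗ R.orthogonalProjection.toLinearMap) =
      (R.subtype ∘ₗ R.orthogonalProjection.toLinearMap) ∘ₗ L)
    (F : Submodule ℝ E)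
    (hdim : finrank ℝ F = finrank ℝ R)
    (htrans : F ⊓ Rᗮ = ⊥) :
    absDet (L ∘ₗ R.subtype) * absDet (R.orthogonalProjection.toLinearMap ∘ₗ F.subtype) =
        absDet (R.orthogonalProjection.toLinearMap ∘ₗ (F.map L).subtype) *
          absDet (L ∘ₗ F.subtype) ∧
      absDet (R.orthogonalProjection.toLinearMap ∘ₗ (F.map L).subtype) *
          absDet (L ∘ₗ F.subtype) ≤ absDet (L ∘ₗ F.subtype) := by
  classical
  set P : E →ₗ[ℝ] R := R.orthogonalProjection.toLinearMap with hP
  have hLinj : Function.Injective L := by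
    intro x y hxy
    by_contra hne
    have hx : x - y ≠ 0 := sub_ne_zero.mpr hne
    have hpos := hLpos (x - y) hx
    rw [map_sub, hxy, sub_self] at hpos
    simp at hpos
  have hdimFL : finrank ℝ F = finrank ℝ (F.map L) :=
    (LinearEquiv.finrank_eq (Submodule.equivMapOfInjective L hLinj F))
  set T₁ : F →ₗ[ℝ] R := P ∘ₗ F.subtype with hT₁
  set T₂ : F →ₗ[ℝ] (F.map L) := (L ∘ₗ F.subtype).codRestrict (F.map L)
    (fun x => Submodule.mem_map_of_mem x.2) with hT₂
  set A₂ : (F.map L) →ₗ[ℝ] R := P ∘ₗ (F.map L).subtype with hA₂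
  have hT₂det : absDet T₂ = absDet (L ∘ₗ F.subtype) := by
    apply absDet_congr
    intro x y
    rfl
  have hkey : ∀ x : F, R.subtype (A₂ (T₂ x)) = ((L ∘ₗ R.subtype) ∘ₗ T₁) x := fun x =>
    (LinearMap.congr_fun hcomm (x : E)).symm
  have heq1 : absDet (A₂ ∘ₗ T₂) = absDet ((L ∘ₗ R.subtype) ∘ₗ T₁) := by
    apply absDet_congr
    intro x y
    rw [show ((L ∘ₗ R.subtype) ∘ₗ T₁) x = R.subtype (A₂ (T₂ x)) from (hkey x).symm,
      show ((L ∘ₗ R.subtype) ∘ₗ T₁) y = R.subtype (A₂ (T₂ y)) from (hkey y).symm]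
    rfl
  have hmul1 : absDet ((L ∘ₗ R.subtype) ∘ₗ T₁) = absDet (L ∘ₗ R.subtype) * absDet T₁ :=
    absDet_comp _ _ hdim
  have hmul2 : absDet (A₂ ∘ₗ T₂) = absDet A₂ * absDet T₂ :=
    absDet_comp _ _ hdimFL
  have heq : absDet (L ∘ₗ R.subtype) * absDet T₁ =
      absDet A₂ * absDet (L ∘ₗ F.subtype) := by
    rw [← hmul1, ← heq1, hmul2, hT₂det]
  have hA₂le : absDet A₂ ≤ 1 := by
    apply absDet_le_one
    intro x
    exact (R.orthogonalProjection.le_opNorm (x : E)).trans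
      (mul_le_of_le_one_left (norm_nonneg _) (R.orthogonalProjectionOnto_norm_le))
  exact ⟨heq, by
    calc absDet A₂ * absDet (L ∘ₗ F.subtype) ≤ 1 * absDet (L ∘ₗ F.subtype) :=
          mul_le_mul_of_nonneg_right hA₂le (absDet_nonneg' _)
      _ = absDet (L ∘ₗ F.subtype) := one_mul _⟩
end

section
/- Let E be a 2n-1 dimensional inner product space decomposed orthogonally as E = ⟨X⟩ ⊕ T with X a unit vector. Let A : E → E be a linear map with A(X) = X and A(T) = T. Then ex(A) = ex(A|_T), where ex denotes the maximal |det| of the restriction to a subspace. -/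
open scoped RealInnerProductSpace
open Module

/-- The expansion of a linear map: the supremum over all subspaces of the source of the
absolute determinant of the restriction (the trivial subspace gives value 1). -/
noncomputable def expansion {E F : Type*} [NormedAddCommGroup E] [InnerProductSpace ℝ E]
    [NormedAddCommGroup F] [InnerProductSpace ℝ F] [FiniteDimensional ℝ E]
    (L : E →ₗ[ℝ] F) : ℝ :=
  ⨆ S : Submodule ℝ E, absDet (L ∘ₗ S.subtype)

namespace ExpansionAux

open Matrix

variable {E F : Type*} [NormedAddCommGroup E] [InnerProductSpace ℝ E]
    [NormedAddCommGroup F] [InnerProductSpace ℝ F]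

/-- The Gram matrix of the images under `L` of a family of vectors. -/
noncomputable def gram (L : E →ₗ[ℝ] F) {ι : Type*} (b : ι → E) : Matrix ι ι ℝ :=
  Matrix.of fun i j => ⟪L (b i), L (b j)⟫

variable {ι ι' : Type*} [Fintype ι] [DecidableEq ι] [Fintype ι'] [DecidableEq ι']

lemma gram_posSemidef (L : E →ₗ[ℝ] F) (b : ι → E) : (gram L b).PosSemidef := by
  rw [Matrix.posSemidef_iff_dotProduct_mulVec]
  constructor
  · ext i j
    simp [gram, Matrix.IsHermitian, Matrix.conjTranspose_apply, real_inner_comm]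
  · intro x
    have : (star x) ⬝ᵥ ((gram L b) *ᵥ x) = ⟪∑ i, x i • L (b i), ∑ j, x j • L (b j)⟫ := by
      simp only [dotProduct, Matrix.mulVec, gram, Matrix.of_apply, sum_inner, inner_sum,
        real_inner_smul_left, real_inner_smul_right, dotProduct, star_trivial]
      congr 1; ext i
      rw [Finset.mul_sum]
      congr 1; ext j
      rw [real_inner_comm]
      ring
    rw [this]
    exact real_inner_self_nonneg

lemma gram_det_nonneg (L : E →ₗ[ℝ] F) (b : ι → E) : 0 ≤ (gram L b).det := by
  have h := gram_posSemidef L b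
  rw [h.isHermitian.det_eq_prod_eigenvalues]
  exact Finset.prod_nonneg fun i _ => by simpa using h.eigenvalues_nonneg i

lemma gram_congr (L : E →ₗ[ℝ] F) (u : ι → E) (C : Matrix ι ι ℝ) :
    gram L (fun j => ∑ k, C k j • u k) = Cᵀ * gram L u * C := by
  ext i j
  simp only [gram, Matrix.of_apply, map_sum, _root_.map_smul, sum_inner, inner_sum,
    real_inner_smul_left, real_inner_smul_right, Matrix.mul_apply, Matrix.transpose_apply,
    Finset.sum_mul, Finset.mul_sum]
  exact Finset.sum_congr rfl fun k _ => Finset.sum_congr rfl fun l _ => by ring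

lemma gram_det_basis_eq (L : E →ₗ[ℝ] F) (b b' : OrthonormalBasis ι ℝ E) :
    (gram L b).det = (gram L b').det := by
  set C : Matrix ι ι ℝ := Matrix.of fun k i => ⟪b' k, b i⟫ with hCdef
  have hb : (fun i => ∑ k, C k i • b' k) = (b : ι → E) := by
    ext i
    exact b'.sum_repr' (b i)
  have hG : gram L b = Cᵀ * gram L b' * C := by
    have h := gram_congr L (b' : ι → E) C
    rwa [hb] at h
  have hC : Cᵀ * C = 1 := by
    ext i j
    have : ∑ k, ⟪(b i : E), b' k⟫ * ⟪(b' k : E), b j⟫ = ⟪(b i : E), b j⟫ :=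
      b'.sum_inner_mul_inner (b i) (b j)
    simp only [Matrix.mul_apply, Matrix.transpose_apply, hCdef, Matrix.of_apply, Matrix.one_apply]
    refine (Finset.sum_congr rfl fun k _ => ?_).trans
      ((b'.sum_inner_mul_inner (b i) (b j)).trans (orthonormal_iff_ite.mp b.orthonormal i j))
    rw [real_inner_comm (b' k) (b i)]
  have hdet : C.det * C.det = 1 := by
    have := congrArg Matrix.det hC
    rwa [Matrix.det_mul, Matrix.det_transpose, Matrix.det_one] at this
  rw [hG, Matrix.det_mul, Matrix.det_mul, Matrix.det_transpose, mul_right_comm, hdet, one_mul]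

lemma gram_det_reindex (L : E →ₗ[ℝ] F) (b : ι → E) (e : ι' ≃ ι) :
    (gram L (b ∘ e)).det = (gram L b).det := by
  have : gram L (b ∘ e) = (gram L b).submatrix e e := rfl
  rw [this, Matrix.det_submatrix_equiv_self]

lemma gram_det_eq (L : E →ₗ[ℝ] F) (b : OrthonormalBasis ι ℝ E) (b' : OrthonormalBasis ι' ℝ E)
    [FiniteDimensional ℝ E] :
    (gram L b).det = (gram L b').det := by
  have hcard : Fintype.card ι' = Fintype.card ι := by
    rw [← finrank_eq_card_basis b.toBasis, ← finrank_eq_card_basis b'.toBasis]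
  obtain e : ι' ≃ ι := Fintype.equivOfCardEq hcard
  have h1 : (gram L (b'.reindex e)).det = (gram L b).det := gram_det_basis_eq L _ b
  have h2 : ((b'.reindex e : ι → E)) = (b' : ι' → E) ∘ e.symm := by
    ext i; simp [OrthonormalBasis.coe_reindex]
  rw [h2] at h1
  rw [← h1, gram_det_reindex]

lemma absDet_eq_sqrt_gram [FiniteDimensional ℝ E] (L : E →ₗ[ℝ] F)
    (b : OrthonormalBasis ι ℝ E) :
    absDet L = Real.sqrt (gram L b).det := by
  unfold absDet
  congr 1
  exact gram_det_eq L (stdOrthonormalBasis ℝ E) b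

lemma absDet_span [FiniteDimensional ℝ E] (L : E →ₗ[ℝ] F) {m : ℕ} {v : Fin m → E}
    (hv : Orthonormal ℝ v) :
    absDet (L ∘ₗ (Submodule.span ℝ (Set.range v)).subtype) = Real.sqrt (gram L v).det := by
  set P := Submodule.span ℝ (Set.range v) with hP
  have hli : LinearIndependent ℝ v := hv.linearIndependent
  let bb : Basis (Fin m) ℝ P := Basis.span hli
  have hbb : ∀ i, (bb i : E) = v i := fun i => congrArg Subtype.val (Basis.span_apply hli i)
  have horth : Orthonormal ℝ bb := by
    rw [orthonormal_iff_ite] at hv ⊢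
    intro i j
    rw [Submodule.coe_inner, hbb, hbb]
    exact hv i j
  rw [absDet_eq_sqrt_gram (L ∘ₗ P.subtype) (bb.toOrthonormalBasis horth)]
  have : gram (L ∘ₗ P.subtype) (bb.toOrthonormalBasis horth) = gram L v := by
    ext i j
    simp only [gram, Matrix.of_apply, Basis.coe_toOrthonormalBasis, LinearMap.comp_apply,
      Submodule.coe_subtype, hbb]
  rw [this]

lemma absDet_bot [FiniteDimensional ℝ E] (L : E →ₗ[ℝ] F) :
    absDet (L ∘ₗ (⊥ : Submodule ℝ E).subtype) = 1 := by
  have h0 : Orthonormal ℝ (Fin.elim0 : Fin 0 → E) := by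
    rw [orthonormal_iff_ite]; exact fun i => i.elim0
  have hsp : Submodule.span ℝ (Set.range (Fin.elim0 : Fin 0 → E)) = ⊥ := by
    simp
  have h := absDet_span L h0
  rw [hsp] at h
  rw [h, Matrix.det_fin_zero, Real.sqrt_one]

lemma bddAbove_absDet [FiniteDimensional ℝ E] (M : E →ₗ[ℝ] F) :
    BddAbove (Set.range fun S : Submodule ℝ E => absDet (M ∘ₗ S.subtype)) := by
  classical
  set c := ‖(LinearMap.toContinuousLinearMap M : E →L[ℝ] F)‖ with hc
  have hMb : ∀ x : E, ‖M x‖ ≤ c * ‖x‖ := fun x =>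
    (LinearMap.toContinuousLinearMap M).le_opNorm x
  set x0 : ℝ := max 1 (c * c) with hx0
  have hx01 : (1 : ℝ) ≤ x0 := le_max_left _ _
  have hx00 : (0 : ℝ) ≤ x0 := le_trans zero_le_one hx01
  set N := finrank ℝ E with hN
  refine ⟨Real.sqrt (Nat.factorial N * x0 ^ N), ?_⟩
  rintro _ ⟨S, rfl⟩
  set m := finrank ℝ ↥S with hm
  have hmN : m ≤ N := Submodule.finrank_le S
  unfold absDet
  apply Real.sqrt_le_sqrt
  set b := stdOrthonormalBasis ℝ ↥S with hb
  set G : Matrix (Fin m) (Fin m) ℝ :=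
    Matrix.of fun i j => ⟪(M ∘ₗ S.subtype) (b i), (M ∘ₗ S.subtype) (b j)⟫ with hG
  have hnormb : ∀ i, ‖(M ∘ₗ S.subtype) (b i)‖ ≤ c := by
    intro i
    have h1 : ‖((b i : E))‖ = 1 := b.orthonormal.1 i
    calc ‖(M ∘ₗ S.subtype) (b i)‖ = ‖M ((b i : E))‖ := rfl
      _ ≤ c * ‖((b i : E))‖ := hMb _
      _ = c := by rw [h1, mul_one]
  have hentry : ∀ i j, |G i j| ≤ x0 := by
    intro i j
    refine le_trans (abs_real_inner_le_norm _ _) (le_trans ?_ (le_max_right _ _))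
    exact mul_le_mul (hnormb i) (hnormb j) (norm_nonneg _)
      (le_trans (norm_nonneg _) (hnormb i))
  have habs : |G.det| ≤ Nat.factorial m • x0 ^ m := by
    have := Matrix.det_le (A := G) (abv := (AbsoluteValue.abs : AbsoluteValue ℝ ℝ))
      (x := x0) (fun i j => hentry i j)
    simpa using this
  calc G.det ≤ |G.det| := le_abs_self _
    _ ≤ Nat.factorial m • x0 ^ m := habs
    _ = (Nat.factorial m : ℝ) * x0 ^ m := by rw [nsmul_eq_mul]
    _ ≤ (Nat.factorial N : ℝ) * x0 ^ N := by
        apply mul_le_mul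
        · exact_mod_cast Nat.factorial_le hmN
        · exact pow_le_pow_right₀ hx01 hmN
        · positivity
        · positivity

lemma absDet_restrict_map [FiniteDimensional ℝ E] (M : E →ₗ[ℝ] F) (T : Submodule ℝ E)
    (S' : Submodule ℝ ↥T) :
    absDet (E := ↥S') ((M ∘ₗ T.subtype) ∘ₗ S'.subtype)
      = absDet (M ∘ₗ (S'.map T.subtype).subtype) := by
  classical
  set v : Fin (finrank ℝ ↥S') → E := fun i => ((stdOrthonormalBasis ℝ ↥S' i : ↥T) : E) with hv
  have hvon : Orthonormal ℝ v := by
    rw [orthonormal_iff_ite]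
    intro i j
    have h := orthonormal_iff_ite.mp (stdOrthonormalBasis ℝ ↥S').orthonormal i j
    rw [Submodule.coe_inner, Submodule.coe_inner] at h
    exact h
  have hsp : Submodule.span ℝ (Set.range v) = S'.map T.subtype := by
    have hr : Set.range v = (T.subtype ∘ₗ S'.subtype) '' Set.range (stdOrthonormalBasis ℝ ↥S') := by
      rw [← Set.range_comp]
      rfl
    rw [hr, ← Submodule.map_span, ← (stdOrthonormalBasis ℝ ↥S').coe_toBasis, Basis.span_eq,
      Submodule.map_comp, Submodule.map_top, Submodule.range_subtype]
  have h1 : absDet (E := ↥S') ((M ∘ₗ T.subtype) ∘ₗ S'.subtype) = Real.sqrt (gram M v).det := rfl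
  have h2 := congrArg (fun P : Submodule ℝ E => absDet (M ∘ₗ P.subtype)) hsp
  rw [h1, ← h2, absDet_span M hvon]

lemma det_single_row {m : ℕ} (N : Matrix (Fin (m+1)) (Fin (m+1)) ℝ) :
    (N.updateRow (Fin.last m) (Pi.single (Fin.last m) 1)).det
      = (N.submatrix Fin.castSucc Fin.castSucc).det := by
  rw [Matrix.det_succ_row _ (Fin.last m)]
  rw [Finset.sum_eq_single (Fin.last m)]
  · have h1 : (N.updateRow (Fin.last m) (Pi.single (Fin.last m) 1)) (Fin.last m) (Fin.last m)
        = 1 := by simp [Matrix.updateRow_self]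
    have h2 : ((N.updateRow (Fin.last m) (Pi.single (Fin.last m) 1)).submatrix
        (Fin.last m).succAbove (Fin.last m).succAbove) = N.submatrix Fin.castSucc Fin.castSucc := by
      ext i j
      simp [Fin.succAbove_last, Matrix.updateRow_apply, (Fin.castSucc_lt_last i).ne]
    rw [h1, h2]
    have h3 : ((-1 : ℝ)) ^ ((Fin.last m : ℕ) + (Fin.last m : ℕ)) = 1 :=
      Even.neg_one_pow ⟨(Fin.last m : ℕ), rfl⟩
    rw [h3]
    ring
  · intro j _ hj
    have : (N.updateRow (Fin.last m) (Pi.single (Fin.last m) 1)) (Fin.last m) j = 0 := by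
      simp [Matrix.updateRow_self, Pi.single_apply, hj]
    rw [this]
    ring
  · intro h
    exact absurd (Finset.mem_univ _) h

lemma det_snoc_aux {m : ℕ} (N : Matrix (Fin (m+1)) (Fin (m+1)) ℝ) (a : ℝ) :
    (N.updateRow (Fin.last m) (fun j => N (Fin.last m) j + (if j = Fin.last m then a else 0))).det
      = N.det + a * (N.submatrix Fin.castSucc Fin.castSucc).det := by
  have h : (fun j => N (Fin.last m) j + (if j = Fin.last m then a else 0))
      = (N (Fin.last m) + a • (Pi.single (Fin.last m) (1:ℝ) : Fin (m+1) → ℝ)) := by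
    funext j
    simp [Pi.single_apply, mul_ite]
  rw [h, Matrix.det_updateRow_add, Matrix.updateRow_eq_self, Matrix.det_updateRow_smul,
    det_single_row]

end ExpansionAux

/-- If `E = ⟨X⟩ ⊕ T` orthogonally with `X` a unit vector, `A X = X` and `A(T) = T`,
then `ex(A) = ex(A|_T)`. -/
theorem expansion_eq_expansion_on_transversal
    {E : Type*} [NormedAddCommGroup E] [InnerProductSpace ℝ E] [FiniteDimensional ℝ E]
    {n : ℕ} (hE : finrank ℝ E = 2 * n - 1)
    (X : E) (hX : ‖X‖ = 1)
    (A : E →ₗ[ℝ] E)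
    (hAX : A X = X)
    (hAT : ((Submodule.span ℝ {X})ᗮ).map A = (Submodule.span ℝ {X})ᗮ) :
    expansion A = expansion (A ∘ₗ ((Submodule.span ℝ {X})ᗮ).subtype) := by
  classical
  open ExpansionAux in
  set T := (Submodule.span ℝ {X})ᗮ with hT
  have hXX : ⟪X, X⟫ = 1 := by
    rw [real_inner_self_eq_norm_mul_norm, hX, one_mul]
  have hAmem : ∀ u : E, u ∈ T → A u ∈ T := by
    intro u hu
    have h : A u ∈ T.map A := Submodule.mem_map_of_mem hu
    rwa [hAT] at h
  have hXAu : ∀ u : E, u ∈ T → ⟪X, A u⟫ = 0 := fun u hu =>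
    Submodule.mem_orthogonal_singleton_iff_inner_right.mp (hAmem u hu)
  have hAuX : ∀ u : E, u ∈ T → ⟪A u, X⟫ = 0 := fun u hu => by
    rw [real_inner_comm]; exact hXAu u hu
  have hbddT := ExpansionAux.bddAbove_absDet (A ∘ₗ T.subtype)
  have hbddE := ExpansionAux.bddAbove_absDet (F := E) A
  set R := expansion (A ∘ₗ T.subtype) with hR
  have hQle : ∀ Q : Submodule ℝ E, Q ≤ T → absDet (A ∘ₗ Q.subtype) ≤ R := by
    intro Q hQT
    have hmc : (Q.comap T.subtype).map T.subtype = Q := by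
      rw [Submodule.map_comap_subtype]
      exact inf_eq_right.mpr hQT
    have h := ExpansionAux.absDet_restrict_map A T (Q.comap T.subtype)
    have h2 := congrArg (fun P : Submodule ℝ E => absDet (A ∘ₗ P.subtype)) hmc
    rw [← h2, ← h]
    exact le_ciSup hbddT _
  have hDle : ∀ {k : ℕ} (c : Fin k → E), Orthonormal ℝ c → (∀ i, c i ∈ T) →
      (ExpansionAux.gram A c).det ≤ R ^ 2 := by
    intro k c hcon hcT
    have hsp : Submodule.span ℝ (Set.range c) ≤ T :=
      Submodule.span_le.mpr (by rintro x ⟨i, rfl⟩; exact hcT i)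
    have habs := ExpansionAux.absDet_span A hcon
    have h0 : 0 ≤ (ExpansionAux.gram A c).det := ExpansionAux.gram_det_nonneg A c
    have hle : absDet (A ∘ₗ (Submodule.span ℝ (Set.range c)).subtype) ≤ R :=
      hQle _ hsp
    rw [habs] at hle
    calc (ExpansionAux.gram A c).det = (Real.sqrt (ExpansionAux.gram A c).det) ^ 2 :=
          (Real.sq_sqrt h0).symm
      _ ≤ R ^ 2 := by
          apply pow_le_pow_left₀ (Real.sqrt_nonneg _) hle
  have hR1 : (1:ℝ) ≤ R := by
    have h := le_ciSup hbddT (⊥ : Submodule ℝ ↥T)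
    rwa [ExpansionAux.absDet_bot] at h
  have hR0 : (0:ℝ) ≤ R := zero_le_one.trans hR1
  refine le_antisymm ?_ ?_
  · refine ciSup_le fun S => ?_
    by_cases hST : S ≤ T
    · exact hQle S hST
    · -- main case: S is not contained in T
      set S₀ := S ⊓ T with hS₀
      set m := finrank ℝ ↥S₀ with hm
      set b₀ : Fin m → E := fun i => ((stdOrthonormalBasis ℝ ↥S₀ i : ↥S₀) : E) with hb₀def
      have hb₀on : Orthonormal ℝ b₀ := by
        rw [orthonormal_iff_ite]; intro i j
        have h := orthonormal_iff_ite.mp (stdOrthonormalBasis ℝ ↥S₀).orthonormal i j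
        rwa [Submodule.coe_inner] at h
      have hb₀mem : ∀ i, b₀ i ∈ S₀ := fun i => SetLike.coe_mem _
      have hb₀span : Submodule.span ℝ (Set.range b₀) = S₀ := by
        have hr : Set.range b₀ = (S₀.subtype) '' Set.range (stdOrthonormalBasis ℝ ↥S₀) := by
          rw [← Set.range_comp]; rfl
        rw [hr, ← Submodule.map_span, ← (stdOrthonormalBasis ℝ ↥S₀).coe_toBasis, Basis.span_eq,
          Submodule.map_top, Submodule.range_subtype]
      set K := S₀ᗮ ⊓ S with hK
      have hsupK : S₀ ⊔ K = S :=
        Submodule.sup_orthogonal_inf_of_hasOrthogonalProjection (inf_le_left : S ⊓ T ≤ S)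
      have hKne : K ≠ ⊥ := by
        intro h
        rw [h, sup_bot_eq] at hsupK
        exact hST (hsupK ▸ (inf_le_right : S ⊓ T ≤ T))
      obtain ⟨v₀, hv₀K, hv₀ne⟩ := K.ne_bot_iff.mp hKne
      set v := ‖v₀‖⁻¹ • v₀ with hv
      have hvK : v ∈ K := K.smul_mem _ hv₀K
      have hvnorm : ‖v‖ = 1 := by
        rw [hv, norm_smul, norm_inv, norm_norm, inv_mul_cancel₀ (norm_ne_zero_iff.mpr hv₀ne)]
      have hvne : v ≠ 0 := by
        intro h; rw [h, norm_zero] at hvnorm; exact zero_ne_one hvnorm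
      have hvS : v ∈ S := (inf_le_right : S₀ᗮ ⊓ S ≤ S) hvK
      have hvS₀ : ∀ u ∈ S₀, ⟪u, v⟫ = 0 := fun u hu =>
        (Submodule.mem_orthogonal S₀ v).mp ((inf_le_left : S₀ᗮ ⊓ S ≤ S₀ᗮ) hvK) u hu
      have hvv : ⟪v, v⟫ = 1 := by
        rw [real_inner_self_eq_norm_mul_norm, hvnorm, one_mul]
      clear_value v
      -- K is one-dimensional
      have hKfr : finrank ℝ ↥K ≤ 1 := by
        have hinj : Function.Injective ((innerSL ℝ X).toLinearMap ∘ₗ K.subtype) := by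
          rw [← LinearMap.ker_eq_bot, Submodule.eq_bot_iff]
          rintro z hz
          have hz0 : ⟪X, (z : E)⟫ = 0 := hz
          have hzT : (z : E) ∈ T := by
            rw [hT]; exact Submodule.mem_orthogonal_singleton_iff_inner_right.mpr hz0
          have hzS : (z : E) ∈ S := (inf_le_right : S₀ᗮ ⊓ S ≤ S) z.2
          have hzS₀ : (z : E) ∈ S₀ := ⟨hzS, hzT⟩
          have hzperp : ∀ u ∈ S₀, ⟪u, (z : E)⟫ = 0 :=
            (Submodule.mem_orthogonal S₀ (z : E)).mp ((inf_le_left : S₀ᗮ ⊓ S ≤ S₀ᗮ) z.2)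
          have : ⟪(z : E), (z : E)⟫ = 0 := hzperp _ hzS₀
          have hz0' : (z : E) = 0 := inner_self_eq_zero.mp this
          exact Subtype.ext hz0'
        calc finrank ℝ ↥K ≤ finrank ℝ ℝ := LinearMap.finrank_le_finrank_of_injective hinj
          _ = 1 := finrank_self ℝ
      have hKspan : (Submodule.span ℝ {v} : Submodule ℝ E) = K := by
        apply Submodule.eq_of_le_of_finrank_le
        · rw [Submodule.span_singleton_le_iff_mem]; exact hvK
        · rw [finrank_span_singleton hvne]; exact hKfr
      -- the adapted orthonormal basis of S
      set b : Fin (m+1) → E := Fin.snoc b₀ v with hb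
      have hbon : Orthonormal ℝ b := by
        rw [orthonormal_iff_ite]
        intro i j
        refine Fin.lastCases ?_ (fun i' => ?_) i
        · refine Fin.lastCases ?_ (fun j' => ?_) j
          · simp [hb, Fin.snoc_last, hvv, hvnorm]
          · have h1 : ⟪v, b₀ j'⟫ = 0 := by rw [real_inner_comm]; exact hvS₀ _ (hb₀mem j')
            simp [hb, Fin.snoc_last, Fin.snoc_castSucc, h1, (Fin.castSucc_lt_last j').ne']
        · refine Fin.lastCases ?_ (fun j' => ?_) j
          · have h1 : ⟪b₀ i', v⟫ = 0 := hvS₀ _ (hb₀mem i')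
            simp [hb, Fin.snoc_last, Fin.snoc_castSucc, h1, (Fin.castSucc_lt_last i').ne]
          · have h1 := orthonormal_iff_ite.mp hb₀on i' j'
            simp only [hb, Fin.snoc_castSucc, h1]
            simp [Fin.castSucc_inj]
      have hbspan : Submodule.span ℝ (Set.range b) = S := by
        apply le_antisymm
        · rw [Submodule.span_le]
          rintro x ⟨i, rfl⟩
          refine Fin.lastCases ?_ (fun i' => ?_) i
          · rw [hb]; simp only [Fin.snoc_last]; exact hvS
          · rw [hb]; simp only [Fin.snoc_castSucc]
            exact (inf_le_left : S ⊓ T ≤ S) (hb₀mem i')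
        · rw [← hsupK]
          refine sup_le ?_ ?_
          · rw [← hb₀span]
            apply Submodule.span_mono
            rintro x ⟨i, rfl⟩
            exact ⟨Fin.castSucc i, by rw [hb, Fin.snoc_castSucc]⟩
          · rw [← hKspan, Submodule.span_singleton_le_iff_mem]
            exact Submodule.subset_span ⟨Fin.last m, by rw [hb, Fin.snoc_last]⟩
      -- decompose v = a • X + w
      set a := (⟪X, v⟫ : ℝ) with ha
      set w := v - a • X with hw
      have hXw : ⟪X, w⟫ = 0 := by
        rw [hw, inner_sub_right, real_inner_smul_right, hXX]; ring
      have hwT : w ∈ T := by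
        rw [hT]; exact Submodule.mem_orthogonal_singleton_iff_inner_right.mpr hXw
      have hvaw : v = a • X + w := by rw [hw]; abel
      have hb₀T : ∀ i, b₀ i ∈ T := fun i => (inf_le_right : S ⊓ T ≤ T) (hb₀mem i)
      have hb₀w : ∀ i, ⟪b₀ i, w⟫ = 0 := by
        intro i
        have h1 : ⟪b₀ i, X⟫ = 0 := by
          have h2 := hb₀T i
          rw [hT] at h2
          exact Submodule.mem_orthogonal_singleton_iff_inner_left.mp h2
        rw [hw, inner_sub_right, real_inner_smul_right, h1, hvS₀ _ (hb₀mem i)]; ring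
      have hAv : A v = a • X + A w := by
        conv_lhs => rw [hvaw]
        rw [map_add, map_smul, hAX]
      set t := ‖w‖ with ht
      have hat : a^2 + t^2 = 1 := by
        have hwX : ⟪w, X⟫ = 0 := by rw [real_inner_comm]; exact hXw
        have hww : ⟪w, w⟫ = t^2 := by rw [real_inner_self_eq_norm_sq]
        have h2 : ⟪v, v⟫ = a^2 + ⟪w, w⟫ := by
          conv_lhs => rw [hvaw]
          simp only [inner_add_left, inner_add_right, real_inner_smul_left,
            real_inner_smul_right, hXX, hXw, hwX]
          ring
        rw [hvv, hww] at h2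
        linarith only [h2]
      -- Gram matrix computation
      set N := ExpansionAux.gram A (Fin.snoc b₀ w) with hN
      have hcross : ∀ u : E, u ∈ T → ⟪A u, A v⟫ = ⟪A u, A w⟫ := by
        intro u hu
        rw [hAv, inner_add_right, real_inner_smul_right, hAuX u hu]
        ring
      have hAvv : ⟪A v, A v⟫ = ⟪A w, A w⟫ + a^2 := by
        rw [hAv]
        simp only [inner_add_left, inner_add_right, real_inner_smul_left,
          real_inner_smul_right, hXX, hXAu w hwT, hAuX w hwT]
        ring
      have hGN : ExpansionAux.gram A b
          = N.updateRow (Fin.last m) (fun j => N (Fin.last m) j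
              + (if j = Fin.last m then a^2 else 0)) := by
        ext i j
        refine Fin.lastCases ?_ (fun i' => ?_) i
        · rw [Matrix.updateRow_self]
          refine Fin.lastCases ?_ (fun j' => ?_) j
          · have h1 : ExpansionAux.gram A b (Fin.last m) (Fin.last m) = ⟪A v, A v⟫ := by
              simp [ExpansionAux.gram, hb, Fin.snoc_last]
            have h2 : N (Fin.last m) (Fin.last m) = ⟪A w, A w⟫ := by
              simp [hN, ExpansionAux.gram, Fin.snoc_last]
            rw [h1, h2, hAvv]
            simp
          · have h1 : ExpansionAux.gram A b (Fin.last m) (Fin.castSucc j') = ⟪A v, A (b₀ j')⟫ := by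
              simp [ExpansionAux.gram, hb, Fin.snoc_last, Fin.snoc_castSucc]
            have h2 : N (Fin.last m) (Fin.castSucc j') = ⟪A w, A (b₀ j')⟫ := by
              simp [hN, ExpansionAux.gram, Fin.snoc_last, Fin.snoc_castSucc]
            have h3 : ⟪A v, A (b₀ j')⟫ = ⟪A w, A (b₀ j')⟫ := by
              rw [real_inner_comm, hcross _ (hb₀T j'), real_inner_comm]
            rw [h1, h2, h3, if_neg (Fin.castSucc_lt_last j').ne, add_zero]
        · rw [Matrix.updateRow_ne (Fin.castSucc_lt_last i').ne]
          refine Fin.lastCases ?_ (fun j' => ?_) j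
          · have h1 : ExpansionAux.gram A b (Fin.castSucc i') (Fin.last m)
                = ⟪A (b₀ i'), A v⟫ := by
              simp [ExpansionAux.gram, hb, Fin.snoc_last, Fin.snoc_castSucc]
            have h2 : N (Fin.castSucc i') (Fin.last m) = ⟪A (b₀ i'), A w⟫ := by
              simp [hN, ExpansionAux.gram, Fin.snoc_last, Fin.snoc_castSucc]
            rw [h1, h2, hcross _ (hb₀T i')]
          · have h1 : ExpansionAux.gram A b (Fin.castSucc i') (Fin.castSucc j')
                = ⟪A (b₀ i'), A (b₀ j')⟫ := by
              simp [ExpansionAux.gram, hb, Fin.snoc_castSucc]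
            have h2 : N (Fin.castSucc i') (Fin.castSucc j') = ⟪A (b₀ i'), A (b₀ j')⟫ := by
              simp [hN, ExpansionAux.gram, Fin.snoc_castSucc]
            rw [h1, h2]
      have hsub : N.submatrix Fin.castSucc Fin.castSucc = ExpansionAux.gram A b₀ := by
        ext i j
        simp [hN, ExpansionAux.gram, Fin.snoc_castSucc]
      have hdet : (ExpansionAux.gram A b).det
          = N.det + a^2 * (ExpansionAux.gram A b₀).det := by
        rw [hGN, ExpansionAux.det_snoc_aux, hsub]
      have hD₀ : (ExpansionAux.gram A b₀).det ≤ R^2 := hDle b₀ hb₀on hb₀T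
      have hNle : N.det ≤ t^2 * R^2 := by
        by_cases hw0 : w = 0
        · have ht0 : t = 0 := by rw [ht, hw0, norm_zero]
          have h0 : N.det = 0 := by
            apply Matrix.det_eq_zero_of_column_eq_zero (Fin.last m)
            intro i
            simp [hN, ExpansionAux.gram, Fin.snoc_last, hw0]
          rw [h0, ht0]
          positivity
        · set w' := t⁻¹ • w with hw'
          have htne : t ≠ 0 := by rw [ht]; exact norm_ne_zero_iff.mpr hw0
          have hw'T : w' ∈ T := T.smul_mem _ hwT
          have hww' : w = t • w' := by
            rw [hw', smul_smul, mul_inv_cancel₀ htne, one_smul]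
          have hw'norm : ‖w'‖ = 1 := by
            rw [hw', norm_smul, norm_inv, norm_norm, inv_mul_cancel₀ htne]
          set c : Fin (m+1) → E := Fin.snoc b₀ w' with hc
          have hcon : Orthonormal ℝ c := by
            rw [orthonormal_iff_ite]
            intro i j
            have hb₀w' : ∀ i, ⟪b₀ i, w'⟫ = 0 := by
              intro i; rw [hw', real_inner_smul_right, hb₀w]; ring
            have hw'w' : ⟪w', w'⟫ = 1 := by
              rw [real_inner_self_eq_norm_mul_norm, hw'norm, one_mul]
            refine Fin.lastCases ?_ (fun i' => ?_) i
            · refine Fin.lastCases ?_ (fun j' => ?_) j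
              · simp [hc, Fin.snoc_last, hw'w', hw'norm]
              · have h1 : ⟪w', b₀ j'⟫ = 0 := by rw [real_inner_comm]; exact hb₀w' j'
                simp [hc, Fin.snoc_last, Fin.snoc_castSucc, h1, (Fin.castSucc_lt_last j').ne']
            · refine Fin.lastCases ?_ (fun j' => ?_) j
              · simp [hc, Fin.snoc_last, Fin.snoc_castSucc, hb₀w' i',
                  (Fin.castSucc_lt_last i').ne]
              · have h1 := orthonormal_iff_ite.mp hb₀on i' j'
                simp only [hc, Fin.snoc_castSucc, h1]
                simp [Fin.castSucc_inj]
          have hcT : ∀ i, c i ∈ T := by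
            intro i
            refine Fin.lastCases ?_ (fun i' => ?_) i
            · rw [hc]; simp only [Fin.snoc_last]; exact hw'T
            · rw [hc]; simp only [Fin.snoc_castSucc]; exact hb₀T i'
          have hdetc : (ExpansionAux.gram A c).det ≤ R^2 := hDle c hcon hcT
          have h0c : 0 ≤ (ExpansionAux.gram A c).det := ExpansionAux.gram_det_nonneg A c
          set d : Fin (m+1) → ℝ := fun k => if k = Fin.last m then t else 1 with hd
          have hscale : (fun j => ∑ k, (Matrix.diagonal d) k j • c k) = Fin.snoc b₀ w := by
            funext j
            rw [Finset.sum_eq_single j]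
            · rw [Matrix.diagonal_apply_eq]
              refine Fin.lastCases ?_ (fun j' => ?_) j
              · simp only [hd, if_pos rfl, hc, Fin.snoc_last]
                exact hww'.symm
              · simp only [hd, if_neg (Fin.castSucc_lt_last j').ne, hc, Fin.snoc_castSucc,
                  one_smul]
            · intro k _ hkj
              rw [Matrix.diagonal_apply_ne _ hkj, zero_smul]
            · intro h; exact absurd (Finset.mem_univ _) h
          have hgram := ExpansionAux.gram_congr A c (Matrix.diagonal d)
          rw [hscale] at hgram
          have hdetd : (Matrix.diagonal d).det = t := by
            rw [Matrix.det_diagonal]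
            rw [Finset.prod_eq_single (Fin.last m)]
            · simp [hd]
            · intro k _ hk; simp [hd, hk]
            · intro h; exact absurd (Finset.mem_univ _) h
          have hNdet : N.det = t^2 * (ExpansionAux.gram A c).det := by
            rw [hN, hgram, Matrix.det_mul, Matrix.det_mul, Matrix.det_transpose, hdetd]
            ring
          rw [hNdet]
          have := mul_le_mul_of_nonneg_left hdetc (sq_nonneg t)
          linarith only [this]
      have habs : absDet (A ∘ₗ S.subtype) = Real.sqrt (ExpansionAux.gram A b).det := by
        have h := ExpansionAux.absDet_span A hbon
        have h2 := congrArg (fun P : Submodule ℝ E => absDet (A ∘ₗ P.subtype)) hbspan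
        rw [← h2, h]
      rw [habs]
      have hfin : (ExpansionAux.gram A b).det ≤ R^2 := by
        rw [hdet]
        have h3 : a^2*R^2 + t^2*R^2 = R^2 := by rw [← add_mul, hat, one_mul]
        have h4 := mul_le_mul_of_nonneg_left hD₀ (sq_nonneg a)
        linarith only [hNle, h3, h4]
      calc Real.sqrt (ExpansionAux.gram A b).det ≤ Real.sqrt (R^2) := Real.sqrt_le_sqrt hfin
        _ = R := Real.sqrt_sq hR0
  · refine ciSup_le fun S' => ?_
    have h := ExpansionAux.absDet_restrict_map A T S'
    rw [h]
    exact le_ciSup hbddE (S'.map T.subtype)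
end

section
/- Let E be a 2n-dimensional inner product space and φ : E → E an invertible linear map. Then there exists a Lagrangian-dimension subspace R ⊆ E with dim R = n such that |det(φ|_R)| = ex(φ), where ex(φ) = max over all subspaces S ⊆ E of |det(φ|_S)|, provided E carries a compatible symplectic form ω and complex structure J with φ symplectic; moreover R can be taken Lagrangian. -/
open scoped RealInnerProductSpace
open Module
open Matrix

namespace SympAux
open Matrix
section MatrixAux


variable {k m : ℕ}

lemma dot_self_eigvec {M : Matrix (Fin k) (Fin k) ℝ} (hM : M.IsHermitian) (i : Fin k) :
    dotProduct (⇑(hM.eigenvectorBasis i)) (⇑(hM.eigenvectorBasis i)) = 1 := by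
  have h := hM.eigenvectorBasis.orthonormal.1 i
  have : (⟪hM.eigenvectorBasis i, hM.eigenvectorBasis i⟫) =
      dotProduct (⇑(hM.eigenvectorBasis i)) (⇑(hM.eigenvectorBasis i)) := by
    exact EuclideanSpace.inner_eq_star_dotProduct _ _
  rw [← this]
  rw [real_inner_self_eq_norm_sq, h]; norm_num

lemma eig_le_one {M : Matrix (Fin k) (Fin k) ℝ} (hM : M.IsHermitian)
    (h : ((1 : Matrix (Fin k) (Fin k) ℝ) - M).PosSemidef) (i : Fin k) :
    hM.eigenvalues i ≤ 1 := by
  have h2 := h.dotProduct_mulVec_nonneg (⇑(hM.eigenvectorBasis i))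
  rw [Matrix.sub_mulVec] at h2
  simp only [star_trivial, dotProduct_sub, Matrix.one_mulVec] at h2
  rw [hM.mulVec_eigenvectorBasis i, dotProduct_smul, smul_eq_mul, dot_self_eigvec hM i] at h2
  linarith

lemma det_le_det {P Q : Matrix (Fin k) (Fin k) ℝ} (hQ : Q.PosDef) (hP : P.PosSemidef)
    (hQP : (Q - P).PosSemidef) : P.det ≤ Q.det := by
  classical
  set B := (open scoped MatrixOrder in CFC.sqrt Q) with hB
  have hBps : B.PosSemidef := by
    open scoped MatrixOrder in exact (CFC.sqrt_nonneg Q).posSemidef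
  have hBB : B * B = Q := by
    open scoped MatrixOrder in exact CFC.sqrt_mul_sqrt_self Q hQ.posSemidef.nonneg
  have hdetB : B.det * B.det = Q.det := by rw [← det_mul, hBB]
  have hQdet : 0 < Q.det := hQ.det_pos
  have hBdet : B.det ≠ 0 := by
    intro h0; rw [h0, mul_zero] at hdetB; rw [← hdetB] at hQdet; exact lt_irrefl _ hQdet
  have hBinv : B⁻¹ * B = 1 := nonsing_inv_mul B (by simpa using hBdet)
  have hBinv' : B * B⁻¹ = 1 := mul_nonsing_inv B (by simpa using hBdet)
  have hBH : Bᴴ = B := hBps.isHermitian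
  have hBiH : (B⁻¹)ᴴ = B⁻¹ := by rw [conjTranspose_nonsing_inv, hBH]
  set R := B⁻¹ * P * B⁻¹ with hR
  have hRps : R.PosSemidef := by
    have := hP.mul_mul_conjTranspose_same (B⁻¹)
    rwa [hBiH] at this
  have honeR : ((1 : Matrix (Fin k) (Fin k) ℝ) - R).PosSemidef := by
    have := hQP.mul_mul_conjTranspose_same (B⁻¹)
    rwa [hBiH, Matrix.mul_sub, Matrix.sub_mul, ← hBB, ← Matrix.mul_assoc,
      hBinv, Matrix.one_mul, hBinv'] at this
  have hdetR : R.det ≤ 1 := by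
    rw [hRps.isHermitian.det_eq_prod_eigenvalues]
    refine Finset.prod_le_one (fun i _ => hRps.eigenvalues_nonneg i) (fun i _ => ?_)
    exact eig_le_one hRps.isHermitian honeR i
  have hPfac : P = B * R * B := by
    rw [hR, Matrix.mul_assoc, Matrix.mul_assoc, hBinv, Matrix.mul_one, ← Matrix.mul_assoc,
      hBinv', Matrix.one_mul]
  calc P.det = B.det * R.det * B.det := by rw [hPfac, det_mul, det_mul]
  _ = Q.det * R.det := by rw [← hdetB]; ring
  _ ≤ Q.det * 1 := by
      exact mul_le_mul_of_nonneg_left hdetR (le_of_lt hQdet)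
  _ = Q.det := mul_one _




variable {k m : ℕ}

lemma ctr {a b : Type*} (M : Matrix a b ℝ) : Mᴴ = Mᵀ := by
  ext i j; simp [Matrix.conjTranspose_apply]

lemma proj_psd (C : Matrix (Fin k) (Fin m) ℝ) (hC : C * Cᵀ = 1) :
    ((1 : Matrix (Fin m) (Fin m) ℝ) - Cᵀ * C).PosSemidef := by
  have key : Cᵀ * C * (Cᵀ * C) = Cᵀ * C := by
    rw [Matrix.mul_assoc, ← Matrix.mul_assoc C, hC, Matrix.one_mul]
  have hidem : ((1 : Matrix (Fin m) (Fin m) ℝ) - Cᵀ * C) * (1 - Cᵀ * C) = 1 - Cᵀ * C := by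
    rw [Matrix.sub_mul, Matrix.one_mul, Matrix.mul_sub, Matrix.mul_one, key]
    abel
  have hsym : ((1 : Matrix (Fin m) (Fin m) ℝ) - Cᵀ * C)ᴴ = 1 - Cᵀ * C := by
    rw [conjTranspose_sub, conjTranspose_one, conjTranspose_mul, ctr, ctr,
      Matrix.transpose_transpose]
  have := posSemidef_conjTranspose_mul_self ((1 : Matrix (Fin m) (Fin m) ℝ) - Cᵀ * C)
  rwa [hsym, hidem] at this

lemma det_CDCt_le (C : Matrix (Fin k) (Fin m) ℝ) (hC : C * Cᵀ = 1) (μ : Fin m → ℝ)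
    (hμ : ∀ l, 0 ≤ μ l) :
    (C * Matrix.diagonal μ * Cᵀ).det ≤ ∏ l, max 1 (μ l) := by
  classical
  set ν : Fin m → ℝ := fun l => max 1 (μ l) - 1 with hν
  have hν0 : ∀ l, 0 ≤ ν l := fun l => by simp [hν, le_max_left]
  set sN : Matrix (Fin m) (Fin m) ℝ := Matrix.diagonal (fun l => Real.sqrt (ν l)) with hsN
  have hsNH : sNᴴ = sN := by rw [ctr, hsN, diagonal_transpose]
  have hsNsN : sN * sN = Matrix.diagonal ν := by
    have h : (fun l => Real.sqrt (ν l) * Real.sqrt (ν l)) = ν :=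
      funext fun l => Real.mul_self_sqrt (hν0 l)
    rw [hsN, diagonal_mul_diagonal, h]
  set G' : Matrix (Fin k) (Fin k) ℝ := 1 + C * Matrix.diagonal ν * Cᵀ with hG'
  have hCNC_ps : (C * Matrix.diagonal ν * Cᵀ).PosSemidef := by
    have hd : (Matrix.diagonal ν).PosSemidef := Matrix.PosSemidef.diagonal (fun l => hν0 l)
    have := hd.mul_mul_conjTranspose_same C
    rwa [ctr] at this
  have hG'pd : G'.PosDef := Matrix.PosDef.one.add_posSemidef hCNC_ps
  have hstep1 : (C * Matrix.diagonal μ * Cᵀ).det ≤ G'.det := by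
    refine det_le_det hG'pd ?_ ?_
    · have hd : (Matrix.diagonal μ).PosSemidef := Matrix.PosSemidef.diagonal (fun l => hμ l)
      have := hd.mul_mul_conjTranspose_same C
      rwa [ctr] at this
    · have hδ : Matrix.diagonal (fun l => max 1 (μ l) - μ l)
          = Matrix.diagonal ν + 1 - Matrix.diagonal μ := by
        ext i j
        rcases eq_or_ne i j with h | h
        · subst h; simp [Matrix.diagonal_apply_eq, Matrix.one_apply_eq, hν]
        · simp [Matrix.diagonal_apply_ne _ h, Matrix.one_apply_ne h]
      have hkey : C * Matrix.diagonal (fun l => max 1 (μ l) - μ l) * Cᵀ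
          = G' - C * Matrix.diagonal μ * Cᵀ := by
        rw [hδ]
        calc C * (Matrix.diagonal ν + 1 - Matrix.diagonal μ) * Cᵀ
            = (C * Matrix.diagonal ν + C * (1 : Matrix (Fin m) (Fin m) ℝ)
                - C * Matrix.diagonal μ) * Cᵀ := by
              rw [Matrix.mul_sub, Matrix.mul_add]
          _ = C * Matrix.diagonal ν * Cᵀ + C * Cᵀ - C * Matrix.diagonal μ * Cᵀ := by
              rw [Matrix.sub_mul, Matrix.add_mul, Matrix.mul_one]
          _ = G' - C * Matrix.diagonal μ * Cᵀ := by rw [hC, hG']; abel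
      rw [← hkey]
      have hd : (Matrix.diagonal (fun l => max 1 (μ l) - μ l)).PosSemidef :=
        Matrix.PosSemidef.diagonal (fun l => by simp [le_max_right])
      have := hd.mul_mul_conjTranspose_same C
      rwa [ctr] at this
  have hstep2 : G'.det = (1 + sN * Cᵀ * C * sN).det := by
    rw [hG', ← hsNsN]
    rw [show C * (sN * sN) * Cᵀ = (C * sN) * (sN * Cᵀ) by
      rw [Matrix.mul_assoc, Matrix.mul_assoc, Matrix.mul_assoc]]
    rw [det_one_add_mul_comm]
    congr 1
    rw [Matrix.mul_assoc, Matrix.mul_assoc, Matrix.mul_assoc]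
  have hstep3 : (1 + sN * Cᵀ * C * sN).det ≤ ((1 : Matrix (Fin m) (Fin m) ℝ)
      + Matrix.diagonal ν).det := by
    refine det_le_det ?_ ?_ ?_
    · exact Matrix.PosDef.one.add_posSemidef (Matrix.PosSemidef.diagonal (fun l => hν0 l))
    · refine Matrix.PosSemidef.add Matrix.PosSemidef.one ?_
      · have hCC : (Cᵀ * C).PosSemidef := by
          have := posSemidef_conjTranspose_mul_self C
          rwa [ctr] at this
        have := hCC.mul_mul_conjTranspose_same sN
        rw [hsNH] at this
        rw [show sN * Cᵀ * C * sN = sN * (Cᵀ * C) * sN by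
          simp only [Matrix.mul_assoc]]
        exact this
    · have heq : (1 : Matrix (Fin m) (Fin m) ℝ) + Matrix.diagonal ν - (1 + sN * Cᵀ * C * sN)
          = sN * (1 - Cᵀ * C) * sNᴴ := by
        rw [hsNH, Matrix.mul_sub, Matrix.sub_mul, Matrix.mul_one, hsNsN]
        simp only [Matrix.mul_assoc]
        abel
      rw [heq]
      exact (proj_psd C hC).mul_mul_conjTranspose_same sN
  have hfin : ((1 : Matrix (Fin m) (Fin m) ℝ) + Matrix.diagonal ν).det = ∏ l, max 1 (μ l) := by
    have h1 : (1 : Matrix (Fin m) (Fin m) ℝ) + Matrix.diagonal ν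
        = Matrix.diagonal (fun l => max 1 (μ l)) := by
      ext i j
      rcases eq_or_ne i j with h | h
      · subst h; simp [Matrix.diagonal_apply_eq, Matrix.one_apply_eq, hν]
      · simp [Matrix.diagonal_apply_ne _ h, Matrix.one_apply_ne h]
    rw [h1, det_diagonal]
  calc (C * Matrix.diagonal μ * Cᵀ).det ≤ G'.det := hstep1
    _ = (1 + sN * Cᵀ * C * sN).det := hstep2
    _ ≤ _ := hstep3
    _ = ∏ l, max 1 (μ l) := hfin




end MatrixAux
section GramAux


variable {E F : Type*} [NormedAddCommGroup E] [InnerProductSpace ℝ E]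
    [NormedAddCommGroup F] [InnerProductSpace ℝ F] [FiniteDimensional ℝ E]
    [FiniteDimensional ℝ F]

lemma gram_det {ι : Type*} [Fintype ι] [DecidableEq ι] (f : OrthonormalBasis ι ℝ E)
    (L : E →ₗ[ℝ] F) :
    Matrix.det (Matrix.of fun i j => ⟪L (f i), L (f j)⟫)
      = LinearMap.det (LinearMap.adjoint L ∘ₗ L) := by
  have h : Matrix.of (fun i j => ⟪L (f i), L (f j)⟫)
      = LinearMap.toMatrix f.toBasis f.toBasis (LinearMap.adjoint L ∘ₗ L) := by
    ext i j
    rw [LinearMap.toMatrix_apply, OrthonormalBasis.coe_toBasis_repr_apply,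
      OrthonormalBasis.repr_apply_apply, OrthonormalBasis.coe_toBasis, LinearMap.comp_apply,
      LinearMap.adjoint_inner_right]
    rfl
  rw [h, LinearMap.det_toMatrix]

lemma absDet_eq_orthonormalBasis {ι : Type*} [Fintype ι] [DecidableEq ι]
    (f : OrthonormalBasis ι ℝ E) (L : E →ₗ[ℝ] F) :
    absDet L = Real.sqrt (Matrix.det (Matrix.of fun i j => ⟪L (f i), L (f j)⟫)) := by
  rw [absDet, gram_det (stdOrthonormalBasis ℝ E) L, gram_det f L]


end GramAux
section IsoAux


variable {E : Type*} [NormedAddCommGroup E] [InnerProductSpace ℝ E] [FiniteDimensional ℝ E]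

lemma exists_isotropic_family (J : E →ₗ[ℝ] E) (hJJ : ∀ x, J (J x) = -x)
    (hJi : ∀ x y : E, ⟪J x, J y⟫ = ⟪x, y⟫) :
    ∀ (d : ℕ) (W : Submodule ℝ E), finrank ℝ W = d → (∀ x ∈ W, J x ∈ W) →
      ∃ (m : ℕ) (v : Fin m → E), Orthonormal ℝ v ∧ (∀ i, v i ∈ W) ∧ 2 * m = d ∧
        ∀ i j, ⟪v i, J (v j)⟫ = 0 := by
  have hJskew : ∀ x y : E, ⟪J x, y⟫ = -⟪x, J y⟫ := by
    intro x y
    have h1 := hJi (J x) y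
    rw [hJJ x] at h1
    rw [← h1, inner_neg_left]
  intro d
  induction d using Nat.strong_induction_on with
  | _ d ih =>
    intro W hW hJW
    rcases Nat.eq_zero_or_pos d with hd0 | hdpos
    · refine ⟨0, Fin.elim0, ?_, (fun i => i.elim0), by omega, fun i => i.elim0⟩
      constructor
      · exact fun i => i.elim0
      · exact fun i => i.elim0
    · -- pick a unit vector in W
      have hWnt : ∃ x ∈ W, x ≠ 0 := by
        by_contra h
        push_neg at h
        have : W = ⊥ := by
          rw [Submodule.eq_bot_iff]
          exact fun x hx => h x hx
        rw [this] at hW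
        simp [finrank_bot] at hW
        omega
      obtain ⟨x, hxW, hx0⟩ := hWnt
      set v₀ : E := ‖x‖⁻¹ • x with hv₀
      have hv₀W : v₀ ∈ W := W.smul_mem _ hxW
      have hv₀n : ‖v₀‖ = 1 := by
        rw [hv₀, norm_smul, norm_inv, norm_norm]
        field_simp [norm_ne_zero_iff.mpr hx0]
      have hJv₀W : J v₀ ∈ W := hJW _ hv₀W
      have hJv₀n : ‖J v₀‖ = 1 := by
        have : ⟪J v₀, J v₀⟫ = ⟪v₀, v₀⟫ := hJi v₀ v₀
        rw [real_inner_self_eq_norm_sq, real_inner_self_eq_norm_sq, hv₀n] at this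
        nlinarith [norm_nonneg (J v₀)]
      have hv₀Jv₀ : ⟪v₀, J v₀⟫ = 0 := by
        have h1 : ⟪J v₀, v₀⟫ = -⟪v₀, J v₀⟫ := hJskew v₀ v₀
        have h2 : ⟪J v₀, v₀⟫ = ⟪v₀, J v₀⟫ := real_inner_comm _ _
        linarith
      -- the pair v₀, J v₀ is orthonormal
      have hJv₀v₀ : ⟪J v₀, v₀⟫ = 0 := by rw [real_inner_comm]; exact hv₀Jv₀
      set pair : Fin 2 → E := ![v₀, J v₀] with hpair
      have hpairon : Orthonormal ℝ pair := by
        rw [orthonormal_iff_ite]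
        intro i j
        fin_cases i <;> fin_cases j <;>
          simp [hpair, real_inner_self_eq_norm_sq, hv₀n, hJv₀n, hv₀Jv₀, hJv₀v₀]
      set U : Submodule ℝ E := Submodule.span ℝ (Set.range pair) with hU
      have hUW : U ≤ W := by
        rw [hU, Submodule.span_le]
        rintro y ⟨i, rfl⟩
        fin_cases i
        · exact hv₀W
        · exact hJv₀W
      have hUrank : finrank ℝ U = 2 := by
        rw [hU, finrank_span_eq_card hpairon.linearIndependent]
        simp
      set W' : Submodule ℝ E := Uᗮ ⊓ W with hW'
      have hrank : finrank ℝ U + finrank ℝ W' = finrank ℝ W :=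
        Submodule.finrank_add_inf_finrank_orthogonal hUW
      -- membership helper for Uᗮ
      have hmemUo : ∀ z : E, ⟪v₀, z⟫ = 0 → ⟪J v₀, z⟫ = 0 → z ∈ Uᗮ := by
        intro z h1 h2
        rw [Submodule.mem_orthogonal]
        intro u hu
        induction hu using Submodule.span_induction with
        | mem y hy =>
          obtain ⟨i, rfl⟩ := hy
          fin_cases i
          · exact h1
          · exact h2
        | zero => simp
        | add a b _ _ ha hb => rw [inner_add_left, ha, hb]; ring
        | smul c a _ ha => rw [inner_smul_left, ha]; ring
      have hoUmem : ∀ z ∈ Uᗮ, ⟪v₀, z⟫ = 0 ∧ ⟪J v₀, z⟫ = 0 := by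
        intro z hz
        rw [Submodule.mem_orthogonal] at hz
        constructor
        · exact hz v₀ (Submodule.subset_span ⟨0, rfl⟩)
        · exact hz (J v₀) (Submodule.subset_span ⟨1, rfl⟩)
      have hJW' : ∀ z ∈ W', J z ∈ W' := by
        intro z hz
        rw [hW', Submodule.mem_inf] at hz ⊢
        obtain ⟨hz1, hz2⟩ := hz
        obtain ⟨ha, hb⟩ := hoUmem z hz1
        refine ⟨hmemUo _ ?_ ?_, hJW _ hz2⟩
        · rw [real_inner_comm, hJskew, real_inner_comm (J v₀) z, hb, neg_zero]
        · rw [hJi, ha]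
      obtain ⟨m', v', hon', hmem', hdim', hiso'⟩ :=
        ih (finrank ℝ W') (by omega) W' rfl hJW'
      have hv'U : ∀ i, ⟪v₀, v' i⟫ = 0 ∧ ⟪J v₀, v' i⟫ = 0 := by
        intro i
        have := hmem' i
        rw [hW', Submodule.mem_inf] at this
        exact hoUmem _ this.1
      refine ⟨m' + 1, Fin.cons v₀ v', ?_, ?_, by omega, ?_⟩
      · rw [orthonormal_iff_ite]
        intro i j
        induction i using Fin.cases with
        | zero =>
          induction j using Fin.cases with
          | zero =>
            simp [Fin.cons_zero, real_inner_self_eq_norm_sq, hv₀n]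
          | succ j' =>
            simp only [Fin.cons_zero, Fin.cons_succ]
            rw [(hv'U j').1]
            simp [(Fin.succ_ne_zero j').symm]
        | succ i' =>
          induction j using Fin.cases with
          | zero =>
            simp only [Fin.cons_zero, Fin.cons_succ]
            rw [real_inner_comm, (hv'U i').1]
            simp [Fin.succ_ne_zero i']
          | succ j' =>
            simp only [Fin.cons_succ]
            rw [orthonormal_iff_ite] at hon'
            rw [hon' i' j']
            simp [Fin.succ_inj]
      · intro i
        induction i using Fin.cases with
        | zero => exact hv₀W
        | succ i' =>
          have := hmem' i'
          rw [hW', Submodule.mem_inf] at this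
          simpa [Fin.cons_succ] using this.2
      · intro i j
        induction i using Fin.cases with
        | zero =>
          induction j using Fin.cases with
          | zero => simpa [Fin.cons_zero] using hv₀Jv₀
          | succ j' =>
            simp only [Fin.cons_zero, Fin.cons_succ]
            rw [real_inner_comm, hJskew, real_inner_comm (J v₀) (v' j'), (hv'U j').2, neg_zero]
        | succ i' =>
          induction j using Fin.cases with
          | zero =>
            simp only [Fin.cons_zero, Fin.cons_succ]
            rw [real_inner_comm, (hv'U i').2]
          | succ j' =>
            simpa [Fin.cons_succ] using hiso' i' j'


end IsoAux
end SympAux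

set_option maxHeartbeats 2000000 in
/-- For a symplectic map `φ` on a `2n`-dimensional symplectic vector space `(E, ω)` with
compatible complex structure `J` inducing the inner product `⟪v,w⟫ = ω(v, Jw)`, there is
an `n`-dimensional Lagrangian subspace `R` realizing the maximal expansion:
`|det(φ|_R)| = ex(φ)`. -/
theorem exists_lagrangian_realizing_expansion
    {E : Type*} [NormedAddCommGroup E] [InnerProductSpace ℝ E] [FiniteDimensional ℝ E]
    {n : ℕ} (hE : finrank ℝ E = 2 * n)
    (ω : E →ₗ[ℝ] E →ₗ[ℝ] ℝ)
    (halt : ∀ v, ω v v = 0)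
    (hnondeg : ∀ v, (∀ w, ω v w = 0) → v = 0)
    (J : E →ₗ[ℝ] E)
    (hJ2 : J ∘ₗ J = -LinearMap.id)
    (hJcompat : ∀ v w, ω (J v) (J w) = ω v w)
    (hg : ∀ v w : E, ⟪v, w⟫ = ω v (J w))
    (φ : E →ₗ[ℝ] E)
    (hφbij : Function.Bijective φ)
    (hφsympl : ∀ v w, ω (φ v) (φ w) = ω v w) :
    ∃ R : Submodule ℝ E, finrank ℝ R = n ∧
      (∀ x ∈ R, ∀ y ∈ R, ω x y = 0) ∧
      absDet (φ ∘ₗ R.subtype) = expansion φ := by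
  classical
  have hJJ : ∀ x, J (J x) = -x := by
    intro x
    have := LinearMap.ext_iff.mp hJ2 x
    simpa using this
  have skew : ∀ x y, ω x y = -(ω y x) := by
    intro x y
    have h := halt (x + y)
    simp only [map_add, LinearMap.add_apply, halt x, halt y] at h
    linarith
  have hgJ : ∀ x y, ω x y = -⟪x, J y⟫ := by
    intro x y
    have h1 : ⟪x, J y⟫ = ω x (J (J y)) := hg x (J y)
    rw [hJJ y, map_neg] at h1
    linarith
  have hJinner : ∀ x y : E, ⟪J x, J y⟫ = ⟪x, y⟫ := by
    intro x y
    rw [hg (J x) (J y), hJcompat x (J y), ← hg x y]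
  set A : E →ₗ[ℝ] E := LinearMap.adjoint φ ∘ₗ φ with hA
  have hAin : ∀ x y : E, ⟪A x, y⟫ = ⟪φ x, φ y⟫ := by
    intro x y
    rw [hA, LinearMap.comp_apply, LinearMap.adjoint_inner_left]
  have hAsym : A.IsSymmetric := by
    intro x y
    rw [hAin x y, real_inner_comm (A y) x, hAin y x, real_inner_comm (φ x) (φ y)]
  have hAinj : Function.Injective A := by
    intro x y hxy
    have h0 : A (x - y) = 0 := by rw [map_sub, hxy, sub_self]
    have h1 : ⟪φ (x - y), φ (x - y)⟫ = 0 := by rw [← hAin, h0, inner_zero_left]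
    have h2 : φ (x - y) = 0 := by rwa [inner_self_eq_zero] at h1
    have h3 : x - y = 0 := hφbij.1 (by rw [h2, map_zero])
    exact sub_eq_zero.mp h3
  have hAsurj : Function.Surjective A :=
    (LinearMap.injective_iff_surjective).mp hAinj
  set φinv := LinearEquiv.ofBijective φ hφbij with hφinvdef
  have hφinv : ∀ x, φ (φinv.symm x) = x := by
    intro x
    have := φinv.apply_symm_apply x
    rwa [hφinvdef, LinearEquiv.ofBijective_apply] at this
  have hadj : ∀ y, LinearMap.adjoint φ y = -J (φinv.symm (J y)) := by
    intro y
    apply ext_inner_right ℝ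
    intro v
    rw [LinearMap.adjoint_inner_left]
    set a := φinv.symm (J y) with ha
    rw [inner_neg_left]
    have h1 : ⟪J a, v⟫ = ω (J a) (J v) := hg (J a) v
    have h2 : ω (J a) (J v) = ω a v := hJcompat a v
    have h3 : ω a v = ω (φ a) (φ v) := (hφsympl a v).symm
    have h4 : φ a = J y := hφinv (J y)
    have h5 : ⟪y, φ v⟫ = ω (φ v) (J y) := by
      rw [real_inner_comm (φ v) y]
      exact hg (φ v) y
    rw [h5, h1, h2, h3, h4]
    linarith [skew (J y) (φ v)]
  have hadjsympl : ∀ x y, ω (LinearMap.adjoint φ x) (LinearMap.adjoint φ y) = ω x y := by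
    intro x y
    rw [hadj x, hadj y]
    have h1 : ω (-J (φinv.symm (J x))) (-J (φinv.symm (J y)))
        = ω (J (φinv.symm (J x))) (J (φinv.symm (J y))) := by
      simp only [map_neg, LinearMap.neg_apply, neg_neg]
    rw [h1, hJcompat, ← hφsympl, hφinv, hφinv, hJcompat]
  have hAsympl : ∀ x y, ω (A x) (A y) = ω x y := by
    intro x y
    rw [hA]
    simp only [LinearMap.comp_apply]
    rw [hadjsympl, hφsympl]
  -- spectral decomposition of A
  set b := hAsym.eigenvectorBasis hE with hb
  set μ := hAsym.eigenvalues hE with hμ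
  have hbeig : ∀ l, A (b l) = μ l • b l := by
    intro l
    exact hAsym.apply_eigenvectorBasis hE l
  have hbnorm : ∀ l, ⟪b l, b l⟫ = 1 := by
    intro l
    rw [real_inner_self_eq_norm_sq, b.orthonormal.1 l]
    norm_num
  have hμpos : ∀ l, 0 < μ l := by
    intro l
    have h1 : ⟪A (b l), b l⟫ = μ l := by
      rw [hbeig, real_inner_smul_left, hbnorm, mul_one]
    have h2 : ⟪A (b l), b l⟫ = ‖φ (b l)‖ ^ 2 := by
      rw [hAin, real_inner_self_eq_norm_sq]
    have h3 : φ (b l) ≠ 0 := by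
      intro h0
      have : b l = 0 := hφbij.1 (by rw [h0, map_zero])
      exact b.orthonormal.ne_zero l this
    have h4 : 0 < ‖φ (b l)‖ ^ 2 := pow_pos (norm_pos_iff.mpr h3) 2
    rw [h1] at h2
    linarith
  -- orthogonality of eigenvectors w.r.t. ω for non-reciprocal eigenvalues
  have hprod0 : ∀ (x y : E) (c c' : ℝ), A x = c • x → A y = c' • y → c * c' ≠ 1 →
      ω x y = 0 := by
    intro x y c c' hx hy hcc
    have h := hAsympl x y
    rw [hx, hy] at h
    simp only [_root_.map_smul, LinearMap.smul_apply, smul_eq_mul] at h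
    have h2 : (c * c' - 1) * ω x y = 0 := by linear_combination h
    rcases mul_eq_zero.mp h2 with h3 | h3
    · exact absurd (by linarith : c * c' = 1) hcc
    · exact h3
  -- the fixed space of A
  set K : Submodule ℝ E := LinearMap.ker (A - LinearMap.id) with hK
  have hKmem : ∀ x, x ∈ K ↔ A x = x := by
    intro x
    rw [hK, LinearMap.mem_ker, LinearMap.sub_apply, LinearMap.id_apply, sub_eq_zero]
  have hKJ : ∀ x ∈ K, J x ∈ K := by
    intro x hx
    rw [hKmem] at hx ⊢
    have hkey : ∀ w, ω (A (J x) - J x) w = 0 := by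
      intro w
      obtain ⟨u, rfl⟩ := hAsurj w
      have e1 : ω (A (J x)) (A u) = ω (J x) u := hAsympl _ _
      have e2 : ω (J x) u = -⟪x, u⟫ := by
        rw [hgJ (J x) u, hJinner]
      have e3 : ω (J x) (A u) = -⟪x, u⟫ := by
        rw [hgJ (J x) (A u), hJinner]
        have : ⟪x, A u⟫ = ⟪x, u⟫ := by
          rw [← hAsym x u, hx]
        rw [this]
      rw [map_sub, LinearMap.sub_apply, e1, e2, e3]
      ring
    have := hnondeg _ hkey
    rw [sub_eq_zero] at this
    exact this
  -- span membership from vanishing coefficients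
  have hmem_span : ∀ (s : Set (Fin (2 * n))) (x : E), (∀ l, l ∉ s → ⟪b l, x⟫ = 0) →
      x ∈ Submodule.span ℝ (b '' s) := by
    intro s x hx
    have hsum := b.sum_repr x
    rw [← hsum]
    refine Submodule.sum_mem _ (fun l _ => ?_)
    by_cases hl : l ∈ s
    · exact Submodule.smul_mem _ _ (Submodule.subset_span ⟨l, hl, rfl⟩)
    · rw [OrthonormalBasis.repr_apply_apply, hx l hl, zero_smul]
      exact Submodule.zero_mem _
  -- eigencoefficient vanishing for fixed vectors
  have horthK : ∀ x : E, A x = x → ∀ l, μ l ≠ 1 → ⟪b l, x⟫ = 0 := by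
    intro x hx l hl
    have h1 : ⟪A (b l), x⟫ = μ l * ⟪b l, x⟫ := by
      rw [hbeig, real_inner_smul_left]
    have h2 : ⟪A (b l), x⟫ = ⟪b l, x⟫ := by
      rw [hAsym (b l) x, hx]
    have h3 : (μ l - 1) * ⟪b l, x⟫ = 0 := by linear_combination h1.symm.trans h2
    rcases mul_eq_zero.mp h3 with h4 | h4
    · exact absurd (by linarith) hl
    · exact h4
  -- the three spectral index sets
  set sP : Set (Fin (2 * n)) := {l | 1 < μ l} with hsP
  set sN : Set (Fin (2 * n)) := {l | μ l < 1} with hsN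
  set sK : Set (Fin (2 * n)) := {l | μ l = 1} with hsK
  set Pspan := Submodule.span ℝ (b '' sP) with hPspan
  set Nspan := Submodule.span ℝ (b '' sN) with hNspan
  -- finrank of spans of eigenvector families
  have hrank_span : ∀ s : Set (Fin (2 * n)),
      finrank ℝ (Submodule.span ℝ (b '' s)) = Fintype.card s := by
    intro s
    have himg : b '' s = Set.range (fun t : s => b t.1) := by
      ext z
      simp [Set.mem_image, Set.mem_range, Subtype.exists]
    have hon : Orthonormal ℝ (fun t : s => b t.1) :=
      b.orthonormal.comp _ Subtype.val_injective
    rw [himg, finrank_span_eq_card hon.linearIndependent]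
  -- J exchanges Pspan and Nspan
  have hJinj : Function.Injective J := by
    intro x y hxy
    have : J (J x) = J (J y) := by rw [hxy]
    rw [hJJ, hJJ, neg_inj] at this
    exact this
  have hJmapP : ∀ x ∈ Pspan, J x ∈ Nspan := by
    intro x hx
    have hle : Pspan ≤ Submodule.comap J Nspan := by
      rw [hPspan, Submodule.span_le]
      rintro z ⟨l, hl, rfl⟩
      rw [Set.mem_setOf_eq] at hl
      simp only [SetLike.mem_coe, Submodule.mem_comap]
      apply hmem_span
      intro l' hl'
      rw [hsN, Set.mem_setOf_eq, not_lt] at hl'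
      have : ⟪b l', J (b l)⟫ = -(ω (b l') (b l)) := by
        rw [hgJ (b l') (b l)]; ring
      rw [this, hprod0 (b l') (b l) (μ l') (μ l) (hbeig l') (hbeig l)
        (by nlinarith [hμpos l, hμpos l']), neg_zero]
    exact hle hx
  have hJmapN : ∀ x ∈ Nspan, J x ∈ Pspan := by
    intro x hx
    have hle : Nspan ≤ Submodule.comap J Pspan := by
      rw [hNspan, Submodule.span_le]
      rintro z ⟨l, hl, rfl⟩
      rw [Set.mem_setOf_eq] at hl
      simp only [SetLike.mem_coe, Submodule.mem_comap]
      apply hmem_span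
      intro l' hl'
      rw [hsP, Set.mem_setOf_eq, not_lt] at hl'
      have : ⟪b l', J (b l)⟫ = -(ω (b l') (b l)) := by
        rw [hgJ (b l') (b l)]; ring
      rw [this, hprod0 (b l') (b l) (μ l') (μ l) (hbeig l') (hbeig l)
        (by nlinarith [hμpos l, hμpos l']), neg_zero]
    exact hle hx
  -- hence the two spans have the same dimension
  have hJbij : Function.Bijective J :=
    ⟨hJinj, (LinearMap.injective_iff_surjective).mp hJinj⟩
  have hfr_le : ∀ (U V : Submodule ℝ E), (∀ x ∈ U, J x ∈ V) → finrank ℝ U ≤ finrank ℝ V := by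
    intro U V hUV
    have hmaple : Submodule.map J U ≤ V := by
      rintro z ⟨x, hxU, rfl⟩
      exact hUV x hxU
    have hcoe : ((LinearEquiv.ofBijective J hJbij : E ≃ₗ[ℝ] E) : E →ₗ[ℝ] E) = J := rfl
    have heq : finrank ℝ (Submodule.map J U) = finrank ℝ U := by
      rw [← hcoe]
      exact LinearEquiv.finrank_map_eq _ U
    rw [← heq]
    exact Submodule.finrank_mono hmaple
  have hpq : finrank ℝ Pspan = finrank ℝ Nspan :=
    le_antisymm (hfr_le _ _ hJmapP) (hfr_le _ _ hJmapN)
  -- K is the span of the eigenvectors with eigenvalue 1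
  have hKspan : K = Submodule.span ℝ (b '' sK) := by
    apply le_antisymm
    · intro x hx
      rw [hKmem] at hx
      apply hmem_span
      intro l hl
      rw [hsK, Set.mem_setOf_eq] at hl
      exact horthK x hx l hl
    · rw [Submodule.span_le]
      rintro z ⟨l, hl, rfl⟩
      rw [hsK, Set.mem_setOf_eq] at hl
      simp only [SetLike.mem_coe]
      rw [hKmem, hbeig, hl, one_smul]
  -- counting
  have hcard : ∀ s : Set (Fin (2 * n)), s.toFinset.card = Fintype.card s := fun s =>
    Set.toFinset_card s
  have hUuniv : sP.toFinset ∪ sN.toFinset ∪ sK.toFinset = Finset.univ := by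
    ext l
    simp only [Finset.mem_union, Set.mem_toFinset, hsP, hsN, hsK, Set.mem_setOf_eq,
      Finset.mem_univ, iff_true]
    rcases lt_trichotomy (μ l) 1 with h | h | h
    · tauto
    · tauto
    · tauto
  have hd1 : Disjoint sP.toFinset sN.toFinset := by
    rw [Finset.disjoint_left]
    intro a ha hb
    rw [Set.mem_toFinset, hsP, Set.mem_setOf_eq] at ha
    rw [Set.mem_toFinset, hsN, Set.mem_setOf_eq] at hb
    linarith
  have hd2 : Disjoint (sP.toFinset ∪ sN.toFinset) sK.toFinset := by
    rw [Finset.disjoint_left]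
    intro a ha hb
    rw [Set.mem_toFinset, hsK, Set.mem_setOf_eq] at hb
    rw [Finset.mem_union, Set.mem_toFinset, Set.mem_toFinset, hsP, hsN,
      Set.mem_setOf_eq, Set.mem_setOf_eq] at ha
    rcases ha with h | h <;> linarith
  have hpartition : Fintype.card sP + Fintype.card sN + Fintype.card sK = 2 * n := by
    have h1 := Finset.card_union_of_disjoint hd2
    have h2 := Finset.card_union_of_disjoint hd1
    rw [hUuniv, h2] at h1
    rw [← hcard, ← hcard, ← hcard]
    rw [Finset.card_univ, Fintype.card_fin] at h1
    omega
  have hcardPN : Fintype.card sP = Fintype.card sN := by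
    have h1 := hrank_span sP
    have h2 := hrank_span sN
    rw [← hPspan] at h1
    rw [← hNspan] at h2
    omega
  have hrankK : finrank ℝ K = Fintype.card sK := by
    rw [hKspan, hrank_span]
  -- the Lagrangian part inside K
  obtain ⟨m, v, hvon, hvmemK, hvdim, hviso⟩ :=
    SympAux.exists_isotropic_family J hJJ hJinner (finrank ℝ K) K rfl hKJ
  have hpm : Fintype.card sP + m = n := by omega
  -- the combined orthonormal family
  set u : Sum sP (Fin m) → E := Sum.elim (fun t => b t.1) v with hu
  set lam : Sum sP (Fin m) → ℝ := Sum.elim (fun t => μ t.1) (fun _ => 1) with hlam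
  have hvA : ∀ i, A (v i) = v i := by
    intro i
    have := hvmemK i
    rwa [hKmem] at this
  have hueig : ∀ i, A (u i) = lam i • u i := by
    rintro (t | i)
    · exact hbeig t.1
    · simp only [hu, hlam, Sum.elim_inr, one_smul]
      exact hvA i
  have hPne1 : ∀ t : sP, μ t.1 ≠ 1 := by
    rintro ⟨l, hl⟩
    rw [hsP, Set.mem_setOf_eq] at hl
    exact ne_of_gt hl
  have hcross : ∀ (t : sP) (i : Fin m), ⟪b t.1, v i⟫ = 0 := by
    intro t i
    exact horthK (v i) (hvA i) t.1 (hPne1 t)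
  have huon : Orthonormal ℝ u := by
    rw [orthonormal_iff_ite]
    rintro (t | i) (t' | i')
    · have hb' := orthonormal_iff_ite.mp b.orthonormal t.1 t'.1
      simp only [hu, Sum.elim_inl]
      rw [hb']
      by_cases h : t = t'
      · subst h; simp
      · have h2 : t.1 ≠ t'.1 := fun hc => h (Subtype.ext hc)
        simp [h, h2]
    · simp only [hu, Sum.elim_inl, Sum.elim_inr]
      rw [hcross t i']
      simp
    · simp only [hu, Sum.elim_inl, Sum.elim_inr]
      rw [real_inner_comm (b t'.1) (v i), hcross t' i]
      simp
    · have hv' := orthonormal_iff_ite.mp hvon i i'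
      simp only [hu, Sum.elim_inr]
      rw [hv']
      by_cases h : i = i'
      · subst h; simp
      · simp [h]
  set R := Submodule.span ℝ (Set.range u) with hR
  have hfinrankR : finrank ℝ R = n := by
    rw [hR, finrank_span_eq_card huon.linearIndependent]
    simp only [Fintype.card_sum, Fintype.card_fin]
    exact hpm
  -- ω vanishes pairwise on the generators
  have hω0 : ∀ i j, ω (u i) (u j) = 0 := by
    rintro (t | i) (t' | i')
    · refine hprod0 _ _ (μ t.1) (μ t'.1) (hbeig t.1) (hbeig t'.1) ?_
      have h1 : 1 < μ t.1 := t.2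
      have h2 : 1 < μ t'.1 := t'.2
      nlinarith
    · refine hprod0 _ _ (μ t.1) 1 (hbeig t.1) (by rw [one_smul]; exact hvA i') ?_
      rw [mul_one]
      exact hPne1 t
    · refine hprod0 _ _ 1 (μ t'.1) (by rw [one_smul]; exact hvA i) (hbeig t'.1) ?_
      rw [one_mul]
      exact hPne1 t'
    · simp only [hu, Sum.elim_inr]
      rw [hgJ, hviso i i', neg_zero]
  have hlag : ∀ x ∈ R, ∀ y ∈ R, ω x y = 0 := by
    intro x hx y hy
    have h1 : ∀ i, ω (u i) y = 0 := by
      intro i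
      induction hy using Submodule.span_induction with
      | mem z hz => obtain ⟨j, rfl⟩ := hz; exact hω0 i j
      | zero => simp
      | add a c _ _ ha hc => rw [map_add, ha, hc, add_zero]
      | smul r a _ ha => rw [_root_.map_smul, smul_eq_mul, ha, mul_zero]
    induction hx using Submodule.span_induction with
    | mem z hz => obtain ⟨i, rfl⟩ := hz; exact h1 i
    | zero => simp
    | add a c _ _ ha hc => rw [map_add, LinearMap.add_apply, ha, hc, add_zero]
    | smul r a _ ha => rw [_root_.map_smul, LinearMap.smul_apply, ha, smul_zero]
  -- an orthonormal basis of R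
  set u' : Sum sP (Fin m) → R := fun i => ⟨u i, Submodule.subset_span ⟨i, rfl⟩⟩ with hu'
  have huon' : Orthonormal ℝ u' := by
    rw [orthonormal_iff_ite]
    intro i j
    have h := orthonormal_iff_ite.mp huon i j
    rw [Submodule.coe_inner]
    exact h
  have hspan' : ⊤ ≤ Submodule.span ℝ (Set.range u') := by
    have hmap : Submodule.map R.subtype (Submodule.span ℝ (Set.range u')) = R := by
      rw [Submodule.map_span]
      congr 1
      rw [← Set.range_comp]
      rfl
    intro x _
    have hx1 : (x : E) ∈ Submodule.map R.subtype (Submodule.span ℝ (Set.range u')) := by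
      rw [hmap]; exact x.2
    obtain ⟨y, hy, hyx⟩ := hx1
    rwa [show y = x from Subtype.ext hyx] at hy
  set f : OrthonormalBasis (Sum sP (Fin m)) ℝ R := OrthonormalBasis.mk huon' hspan' with hf
  have hfcoe : ∀ i, ((f i : R) : E) = u i := by
    intro i
    rw [hf, OrthonormalBasis.coe_mk]
  -- value of absDet on R
  have hGramR : (Matrix.of fun i j => ⟪(φ ∘ₗ R.subtype) (f i), (φ ∘ₗ R.subtype) (f j)⟫)
      = Matrix.diagonal lam := by
    ext i j
    simp only [Matrix.of_apply, LinearMap.comp_apply, Submodule.subtype_apply]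
    rw [hfcoe i, hfcoe j]
    have h1 : ⟪φ (u i), φ (u j)⟫ = ⟪A (u i), u j⟫ := (hAin (u i) (u j)).symm
    rw [h1, hueig i, real_inner_smul_left]
    rw [orthonormal_iff_ite.mp huon i j]
    rw [Matrix.diagonal_apply]
    by_cases h : i = j
    · subst h; simp
    · simp [h]
  have hvalR : absDet (φ ∘ₗ R.subtype) = Real.sqrt (∏ t : sP, μ t.1) := by
    rw [SympAux.absDet_eq_orthonormalBasis f, hGramR, Matrix.det_diagonal]
    congr 1
    rw [hlam, Fintype.prod_sum_type]
    simp
  have hMfin : ∏ t : sP, μ t.1 = ∏ l, max 1 (μ l) := by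
    rw [← Finset.prod_filter_mul_prod_filter_not Finset.univ (fun l => 1 < μ l)
      (fun l => max 1 (μ l))]
    have e1 : ∏ l ∈ Finset.univ.filter (fun l => 1 < μ l), max 1 (μ l)
        = ∏ l ∈ Finset.univ.filter (fun l => 1 < μ l), μ l := by
      refine Finset.prod_congr rfl (fun l hl => ?_)
      rw [Finset.mem_filter] at hl
      exact max_eq_right (le_of_lt hl.2)
    have e2 : ∏ l ∈ Finset.univ.filter (fun l => ¬ 1 < μ l), max 1 (μ l) = 1 := by
      refine Finset.prod_eq_one (fun l hl => ?_)
      rw [Finset.mem_filter, not_lt] at hl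
      exact max_eq_left hl.2
    have e3 : ∏ l ∈ Finset.univ.filter (fun l => 1 < μ l), μ l = ∏ t : sP, μ t.1 := by
      refine Finset.prod_subtype _ (fun x => ?_) μ
      simp [hsP, Finset.mem_filter]
    rw [e1, e2, e3, mul_one]
  -- the upper bound over all subspaces
  have hbound : ∀ S : Submodule ℝ E, absDet (φ ∘ₗ S.subtype)
      ≤ Real.sqrt (∏ l, max 1 (μ l)) := by
    intro S
    set e := stdOrthonormalBasis ℝ S with he
    set x : Fin (finrank ℝ S) → E := fun i => (e i : E) with hx
    set C : Matrix (Fin (finrank ℝ S)) (Fin (2 * n)) ℝ := Matrix.of fun i l => ⟪x i, b l⟫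
      with hC
    have hCC : C * Cᵀ = 1 := by
      ext i j
      rw [Matrix.mul_apply]
      simp only [hC, Matrix.transpose_apply, Matrix.of_apply]
      have hterm : ∀ l, ⟪x i, b l⟫ * ⟪x j, b l⟫ = ⟪x i, b l⟫ * ⟪b l, x j⟫ := by
        intro l
        rw [real_inner_comm (x j) (b l)]
      rw [Finset.sum_congr rfl (fun l _ => hterm l), b.sum_inner_mul_inner]
      have hee := orthonormal_iff_ite.mp e.orthonormal i j
      rw [Submodule.coe_inner] at hee
      rw [hx]
      rw [hee, Matrix.one_apply]
    have hGram : (Matrix.of fun i j => ⟪(φ ∘ₗ S.subtype) (e i), (φ ∘ₗ S.subtype) (e j)⟫)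
        = C * Matrix.diagonal μ * Cᵀ := by
      ext i j
      rw [Matrix.mul_apply]
      simp only [Matrix.of_apply, LinearMap.comp_apply, Submodule.subtype_apply,
        Matrix.mul_diagonal, Matrix.transpose_apply, hC]
      have h1 : ⟪φ (x i), φ (x j)⟫ = ⟪A (x i), x j⟫ := (hAin _ _).symm
      have h2 : ∀ l, ⟪A (x i), b l⟫ = μ l * ⟪x i, b l⟫ := by
        intro l
        rw [hAsym (x i) (b l), hbeig, real_inner_smul_right]
      have h3 : ⟪A (x i), x j⟫ = ∑ l, ⟪A (x i), b l⟫ * ⟪b l, x j⟫ :=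
        (b.sum_inner_mul_inner _ _).symm
      rw [show ((φ (↑(e i)) : E)) = φ (x i) from rfl]
      rw [h1, h3]
      refine Finset.sum_congr rfl (fun l _ => ?_)
      rw [h2 l, real_inner_comm (x j) (b l)]
      ring
    rw [SympAux.absDet_eq_orthonormalBasis e, hGram]
    refine Real.sqrt_le_sqrt ?_
    exact SympAux.det_CDCt_le C hCC μ (fun l => le_of_lt (hμpos l))
  -- conclusion via the supremum
  have hbdd : BddAbove (Set.range fun S : Submodule ℝ E => absDet (φ ∘ₗ S.subtype)) := by
    refine ⟨Real.sqrt (∏ l, max 1 (μ l)), ?_⟩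
    rintro t ⟨S, rfl⟩
    exact hbound S
  have hle : expansion φ ≤ Real.sqrt (∏ l, max 1 (μ l)) := ciSup_le hbound
  have hge : absDet (φ ∘ₗ R.subtype) ≤ expansion φ := le_ciSup hbdd R
  have hvalR' : absDet (φ ∘ₗ R.subtype) = Real.sqrt (∏ l, max 1 (μ l)) := by
    rw [hvalR, hMfin]
  refine ⟨R, hfinrankR, hlag, ?_⟩
  rw [hvalR']
  apply le_antisymm
  · rw [← hvalR']
    exact hge
  · exact hle
end
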